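/- arXiv:math/0412236 — 3 statements merged into one kernel-verified Lean document; each statement's English description precedes it below -/
import Mathlib

section
/- For each fixed real p with 2 ≤ p < ∞ and fixed n ≥ 1, the ratio ‖z₁^k e^{-|z|²/2}‖_{L^p(ℝ^{2n})} / ‖z₁^k e^{-|z|²/2}‖_{L^2(ℝ^{2n})} is comparable, as k → ∞, to k^{(1/2)(1/p − 1/2)}; i.e., there exist constants c, C > 0 such that c·k^{(1/2)(1/p−1/2)} ≤ ratio ≤ C·k^{(1/2)(1/p−1/2)} for all k ≥ 1. -/
open MeasureTheory Complex Real

noncomputable section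

/-- Partial derivative in the `x_j` direction for functions on `ℂⁿ ≅ ℝ^{2n}`. -/
def pdx (n : ℕ) (j : Fin n) (f : (Fin n → ℂ) → ℂ) : (Fin n → ℂ) → ℂ :=
  fun z => fderiv ℝ f z (Pi.single j 1)

/-- Partial derivative in the `y_j` direction. -/
def pdy (n : ℕ) (j : Fin n) (f : (Fin n → ℂ) → ℂ) : (Fin n → ℂ) → ℂ :=
  fun z => fderiv ℝ f z (Pi.single j Complex.I)

/-- Wirtinger derivative `∂_{z_j} = (1/2)(∂_{x_j} - i ∂_{y_j})`. -/
def wz (n : ℕ) (j : Fin n) (f : (Fin n → ℂ) → ℂ) : (Fin n → ℂ) → ℂ :=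
  fun z => (1/2 : ℂ) * (pdx n j f z - Complex.I * pdy n j f z)

/-- Wirtinger derivative `∂_{z̄_j} = (1/2)(∂_{x_j} + i ∂_{y_j})`. -/
def wzb (n : ℕ) (j : Fin n) (f : (Fin n → ℂ) → ℂ) : (Fin n → ℂ) → ℂ :=
  fun z => (1/2 : ℂ) * (pdx n j f z + Complex.I * pdy n j f z)

/-- The operator `∂_{x_j} + i y_j`. -/
def Aop (n : ℕ) (j : Fin n) (f : (Fin n → ℂ) → ℂ) : (Fin n → ℂ) → ℂ :=
  fun z => pdx n j f z + Complex.I * ((z j).im : ℂ) * f z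

/-- The operator `∂_{y_j} - i x_j`. -/
def Bop (n : ℕ) (j : Fin n) (f : (Fin n → ℂ) → ℂ) : (Fin n → ℂ) → ℂ :=
  fun z => pdy n j f z - Complex.I * ((z j).re : ℂ) * f z

/-- The twisted Laplacian `L = -(1/2) Σ_j [(∂_{x_j}+iy_j)² + (∂_{y_j}-ix_j)²]`. -/
def twistedL (n : ℕ) (f : (Fin n → ℂ) → ℂ) : (Fin n → ℂ) → ℂ :=
  fun z => (-(1/2) : ℂ) * ∑ j : Fin n, (Aop n j (Aop n j f) z + Bop n j (Bop n j f) z)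

/-- `|z|² = Σ_j (x_j² + y_j²)`. -/
def normSq2 (n : ℕ) (z : Fin n → ℂ) : ℝ := ∑ j : Fin n, Complex.normSq (z j)

/-- The Gaussian `e^{-|z|²}`. -/
def gauss (n : ℕ) : (Fin n → ℂ) → ℂ := fun z => Complex.exp (-(normSq2 n z : ℂ))

/-- Iterated Wirtinger derivative `∂_z^α`. -/
def wzMulti (n : ℕ) (α : Fin n → ℕ) (f : (Fin n → ℂ) → ℂ) : (Fin n → ℂ) → ℂ :=
  (List.finRange n).foldr (fun j g => (wz n j)^[α j] g) f

/-- Iterated Wirtinger derivative `∂_{z̄}^β`. -/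
def wzbMulti (n : ℕ) (β : Fin n → ℕ) (f : (Fin n → ℂ) → ℂ) : (Fin n → ℂ) → ℂ :=
  (List.finRange n).foldr (fun j g => (wzb n j)^[β j] g) f

/-- The eigenfunctions `f_{α,β} = (-1)^{|α|+|β|} e^{|z|²/2} ∂_z^α ∂_{z̄}^β e^{-|z|²}`. -/
def fab (n : ℕ) (α β : Fin n → ℕ) : (Fin n → ℂ) → ℂ :=
  fun z => (-1 : ℂ) ^ ((∑ j, α j) + (∑ j, β j)) * Complex.exp ((normSq2 n z : ℂ) / 2) *
    wzMulti n α (wzbMulti n β (gauss n)) z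

/-- The unsigned diagonal eigenfunctions `f_{α,α} = e^{|z|²/2} ∂_z^α ∂_{z̄}^α e^{-|z|²}`. -/
def faa (n : ℕ) (α : Fin n → ℕ) : (Fin n → ℂ) → ℂ :=
  fun z => Complex.exp ((normSq2 n z : ℂ) / 2) * wzMulti n α (wzbMulti n α (gauss n)) z

/-- The Euclidean Laplacian on `ℝ^{2n}`. -/
def lap (n : ℕ) (f : (Fin n → ℂ) → ℂ) : (Fin n → ℂ) → ℂ :=
  fun z => ∑ j : Fin n, (pdx n j (pdx n j f) z + pdy n j (pdy n j f) z)

/-- The radial eigenfunctions `f_k = e^{|z|²/2} Δ^k e^{-|z|²}`. -/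
def fk (n : ℕ) (k : ℕ) : (Fin n → ℂ) → ℂ :=
  fun z => Complex.exp ((normSq2 n z : ℂ) / 2) * ((lap n)^[k] (gauss n)) z

/-- The operator `D_j = 2∂_{z̄_j} + z_j`. -/
def Dop (n : ℕ) (j : Fin n) (f : (Fin n → ℂ) → ℂ) : (Fin n → ℂ) → ℂ :=
  fun z => 2 * wzb n j f z + z j * f z

/-- The operator `D_j* = -2∂_{z_j} + z̄_j`. -/
def Dstar (n : ℕ) (j : Fin n) (f : (Fin n → ℂ) → ℂ) : (Fin n → ℂ) → ℂ :=
  fun z => -2 * wz n j f z + (starRingEnd ℂ) (z j) * f z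

/-- The `L^p` norm over `ℝ^{2n} ≅ ℂⁿ`. -/
def Lpn (n : ℕ) (p : ℝ) (f : (Fin n → ℂ) → ℂ) : ℝ :=
  (∫ z : Fin n → ℂ, ‖f z‖ ^ p) ^ (1/p)

end

open Filter Topology Nat


lemma stirling_lb (m : ℕ) (hm : 1 ≤ m) : Real.sqrt π ≤ Stirling.stirlingSeq m := by
  obtain ⟨j, rfl⟩ := Nat.exists_eq_add_of_le hm
  have ht : Tendsto (Stirling.stirlingSeq ∘ Nat.succ) atTop (𝓝 (Real.sqrt π)) :=
    Stirling.tendsto_stirlingSeq_sqrt_pi.comp (tendsto_add_atTop_nat 1)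
  have := Stirling.stirlingSeq'_antitone.le_of_tendsto ht j
  simpa [Nat.succ_eq_add_one, Nat.add_comm] using this

lemma stirling_ub (m : ℕ) (hm : 1 ≤ m) : Stirling.stirlingSeq m ≤ Real.exp 1 := by
  obtain ⟨j, rfl⟩ := Nat.exists_eq_add_of_le hm
  have h1 : Stirling.stirlingSeq (1 + j) ≤ Stirling.stirlingSeq 1 := by
    have := Stirling.stirlingSeq'_antitone (Nat.zero_le j)
    simpa [Nat.succ_eq_add_one, Nat.add_comm] using this
  refine h1.trans ?_
  rw [Stirling.stirlingSeq_one]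
  rw [div_le_iff₀ (by positivity)]
  nlinarith [Real.sq_sqrt (by norm_num : (0:ℝ) ≤ 2), Real.sqrt_nonneg 2,
    Real.sqrt_le_sqrt (by norm_num : (1:ℝ) ≤ 2), Real.sqrt_one, Real.exp_pos 1]

lemma log_factorial_bounds (m : ℕ) (hm : 1 ≤ m) :
    (m:ℝ) * Real.log m - m + (1/2) * Real.log (2*m) ≤ Real.log (m !) ∧
    Real.log (m !) ≤ (m:ℝ) * Real.log m - m + (1/2) * Real.log (2*m) + 1 := by
  have hm0 : (0:ℝ) < m := by exact_mod_cast hm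
  have hfac : (m ! : ℝ) = Stirling.stirlingSeq m * (Real.sqrt (2*m) * ((m:ℝ)/Real.exp 1)^m) := by
    rw [Stirling.stirlingSeq, div_mul_cancel₀]
    positivity
  have hσpos : 0 < Stirling.stirlingSeq m := lt_of_lt_of_le (by positivity) (stirling_lb m hm)
  have hlog : Real.log (m !) = Real.log (Stirling.stirlingSeq m) + ((1/2) * Real.log (2*m)
      + (m:ℝ) * (Real.log m - 1)) := by
    rw [hfac, Real.log_mul hσpos.ne' (by positivity), Real.log_mul (by positivity) (by positivity),
      Real.log_sqrt (by positivity), Real.log_pow, Real.log_div hm0.ne' (Real.exp_ne_zero 1),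
      Real.log_exp]
    ring
  have hσ1 : 0 ≤ Real.log (Stirling.stirlingSeq m) :=
    Real.log_nonneg (le_trans (by nlinarith [Real.sq_sqrt Real.pi_pos.le, Real.sqrt_nonneg π,
      Real.pi_gt_three]) (stirling_lb m hm))
  have hσ2 : Real.log (Stirling.stirlingSeq m) ≤ 1 := by
    calc Real.log (Stirling.stirlingSeq m) ≤ Real.log (Real.exp 1) :=
          Real.log_le_log hσpos (stirling_ub m hm)
      _ = 1 := Real.log_exp 1
  constructor <;> rw [hlog] <;> nlinarith

lemma gamma_ub (s : ℝ) (hs : 1 ≤ s) :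
    Real.log (Real.Gamma (s+1)) ≤ Real.log ((⌊s⌋₊)!) + (s - ⌊s⌋₊) * Real.log (⌊s⌋₊ + 1) := by
  set m := ⌊s⌋₊ with hmdef
  have hms : (m:ℝ) ≤ s := Nat.floor_le (by linarith)
  have hsm : s < m + 1 := Nat.lt_floor_add_one s
  set t := s - (m:ℝ) with htdef
  have ht0 : 0 ≤ t := by simp [htdef]; linarith
  have ht1 : t ≤ 1 := by simp [htdef]; linarith
  have hconv := Real.convexOn_log_Gamma.2 (x := (m:ℝ)+1) (y := (m:ℝ)+2)
    (by simp; positivity) (by simp; positivity)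
    (by linarith : (0:ℝ) ≤ 1 - t) ht0 (by ring)
  have hcomb : (1-t) • ((m:ℝ)+1) + t • ((m:ℝ)+2) = s + 1 := by
    simp only [smul_eq_mul]; ring
  rw [hcomb] at hconv
  simp only [Function.comp_apply, smul_eq_mul] at hconv
  have hf1 : Real.log (Real.Gamma ((m:ℝ)+1)) = Real.log (m !) := by
    rw [Real.Gamma_nat_eq_factorial m]
  have hf2 : Real.log (Real.Gamma ((m:ℝ)+2)) = Real.log ((m+1)!) := by
    have h := Real.Gamma_nat_eq_factorial (m+1)
    push_cast at h
    rw [show (m:ℝ)+2 = (m:ℝ)+1+1 by ring, h]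
  have hfact : Real.log ((m+1)!) = Real.log ((m:ℝ)+1) + Real.log (m !) := by
    rw [Nat.factorial_succ]
    push_cast
    rw [Real.log_mul (by positivity) (by positivity : (0:ℝ) < (m ! : ℝ)).ne']
  rw [hf1, hf2, hfact] at hconv
  calc Real.log (Real.Gamma (s+1))
      ≤ (1-t) * Real.log (m !) + t * (Real.log ((m:ℝ)+1) + Real.log (m !)) := hconv
    _ = Real.log (m !) + t * Real.log ((m:ℝ)+1) := by ring

lemma gamma_lb (s : ℝ) (hs : 1 ≤ s) :
    Real.log ((⌊s⌋₊)!) + (s - ⌊s⌋₊) * Real.log (⌊s⌋₊) ≤ Real.log (Real.Gamma (s+1)) := by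
  set m := ⌊s⌋₊ with hmdef
  have hm1 : 1 ≤ m := Nat.le_floor (by exact_mod_cast hs)
  have hm0 : (0:ℝ) < m := by exact_mod_cast hm1
  have hms : (m:ℝ) ≤ s := Nat.floor_le (by linarith)
  have hsm : s < m + 1 := Nat.lt_floor_add_one s
  set t := s - (m:ℝ) with htdef
  have ht0 : 0 ≤ t := by simp [htdef]; linarith
  have ht1 : t ≤ 1 := by simp [htdef]; linarith
  have h1t : (0:ℝ) < 1 + t := by linarith
  have hconv := Real.convexOn_log_Gamma.2 (x := (m:ℝ)) (y := s+1)
    (by simpa using hm0) (by simp; linarith)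
    (by positivity : (0:ℝ) ≤ t/(1+t)) (by positivity : (0:ℝ) ≤ 1/(1+t))
    (by field_simp; ring)
  have hcomb : (t/(1+t)) • (m:ℝ) + (1/(1+t)) • (s+1) = (m:ℝ) + 1 := by
    simp only [smul_eq_mul]
    field_simp
    nlinarith [htdef, hms]
  rw [hcomb] at hconv
  simp only [Function.comp_apply, smul_eq_mul] at hconv
  have hfm1 : Real.log (Real.Gamma ((m:ℝ)+1)) = Real.log (m !) := by
    rw [Real.Gamma_nat_eq_factorial m]
  have hfm : Real.log (Real.Gamma ((m:ℝ))) = Real.log (m !) - Real.log m := by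
    have h := Real.Gamma_nat_eq_factorial (m-1)
    have hc : ((m-1 : ℕ):ℝ) + 1 = (m:ℝ) := by
      push_cast [Nat.cast_sub hm1]; ring
    rw [hc] at h
    rw [h]
    have hfac : (m ! : ℝ) = (m:ℝ) * ((m-1)! : ℝ) := by
      rw [← Nat.mul_factorial_pred (by omega : m ≠ 0)]; push_cast; ring
    rw [hfac, Real.log_mul hm0.ne' (by positivity : (0:ℝ) < ((m-1)! : ℝ)).ne']
    ring
  rw [hfm1, hfm] at hconv
  -- hconv : log m! ≤ (t/(1+t)) * (log m! - log m) + (1/(1+t)) * log Γ(s+1)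
  have := mul_le_mul_of_nonneg_left hconv h1t.le
  rw [mul_add] at this
  have e1 : (1+t) * (t/(1+t) * (Real.log (m !) - Real.log m)) = t * (Real.log (m !) - Real.log m) := by
    field_simp
  have e2 : (1+t) * (1/(1+t) * Real.log (Real.Gamma (s+1))) = Real.log (Real.Gamma (s+1)) := by
    field_simp
  rw [e1, e2] at this
  nlinarith [this]

lemma gamma_phi_bounds (s : ℝ) (hs : 1 ≤ s) :
    s * Real.log s - s + (1/2) * Real.log s - 4 ≤ Real.log (Real.Gamma (s+1)) ∧
    Real.log (Real.Gamma (s+1)) ≤ s * Real.log s - s + (1/2) * Real.log s + 4 := by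
  set m := ⌊s⌋₊ with hmdef
  have hm1 : 1 ≤ m := Nat.le_floor (by exact_mod_cast hs)
  have hM1 : (1:ℝ) ≤ (m:ℝ) := by exact_mod_cast hm1
  have hM0 : (0:ℝ) < m := by linarith
  have hms : (m:ℝ) ≤ s := Nat.floor_le (by linarith)
  have hsm : s < (m:ℝ) + 1 := Nat.lt_floor_add_one s
  have hs0 : (0:ℝ) < s := by linarith
  set t := s - (m:ℝ) with htdef
  have ht0 : 0 ≤ t := by simp only [htdef]; linarith
  have ht1 : t ≤ 1 := by simp only [htdef]; linarith
  have hs2M : s ≤ 2 * m := by linarith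
  set L := Real.log m with hLdef
  set S := Real.log s with hSdef
  have f1 : 0 ≤ L := Real.log_nonneg hM1
  have f2 : L ≤ S := Real.log_le_log hM0 hms
  have f3 : S - L ≤ t / m := by
    have : S - L = Real.log (s / m) := (Real.log_div hs0.ne' hM0.ne').symm
    rw [this]
    have := Real.log_le_sub_one_of_pos (show (0:ℝ) < s/m by positivity)
    calc Real.log (s/m) ≤ s/m - 1 := this
      _ = t/m := by field_simp; linarith [htdef]
  have f3' : S ≤ L + t := by
    have : t / m ≤ t := by
      rw [div_le_iff₀ hM0]; nlinarith
    linarith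
  have f4 : s * S - s * L ≤ 2 * t := by
    have h1 : s * (S - L) ≤ s * (t / m) := by
      apply mul_le_mul_of_nonneg_left f3 hs0.le
    have h2 : s * (t / m) ≤ 2 * t := by
      rw [mul_div_assoc']
      rw [div_le_iff₀ hM0]
      nlinarith
    nlinarith
  have f5 : Real.log ((m:ℝ)+1) ≤ Real.log 2 + S := by
    rw [← Real.log_mul (by norm_num) hs0.ne']
    exact Real.log_le_log (by linarith) (by linarith)
  have f6 : Real.log 2 ≤ (7/10 : ℝ) := by
    have := Real.log_two_lt_d9
    linarith
  have f6' : 0 ≤ Real.log 2 := Real.log_nonneg (by norm_num)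
  have f7 : Real.log (2*(m:ℝ)) = Real.log 2 + L := Real.log_mul (by norm_num) hM0.ne'
  obtain ⟨fl, fu⟩ := log_factorial_bounds m hm1
  rw [f7] at fl fu
  rw [show Real.log ((m:ℕ):ℝ) = L from rfl] at fl fu
  clear_value t L S
  have hsL : s * L = (m:ℝ) * L + t * L := by rw [htdef]; ring
  have hMS : (m:ℝ) * L ≤ (m:ℝ) * S := mul_le_mul_of_nonneg_left f2 hM0.le
  constructor
  · have hg := gamma_lb s hs
    rw [← hmdef] at hg
    have htL : 0 ≤ t * L := mul_nonneg ht0 f1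
    nlinarith [hg, fl, f4, f3', hsL]
  · have hg := gamma_ub s hs
    rw [← hmdef] at hg
    have htS : t * Real.log ((m:ℝ)+1) ≤ t * (Real.log 2 + S) :=
      mul_le_mul_of_nonneg_left f5 ht0
    have hMSe : (m:ℝ) * S = s * S - t * S := by rw [htdef]; ring
    have htlog2 : t * Real.log 2 ≤ (7/10 : ℝ) :=
      (mul_le_mul ht1 f6 f6' (by norm_num)).trans_eq (one_mul _)
    have hMt : (m:ℝ) = s - t := by rw [htdef]; ring
    have hexp : t * (Real.log 2 + S) = t * Real.log 2 + t * S := by ring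
    have htSnn : 0 ≤ t * S := mul_nonneg ht0 (hSdef ▸ Real.log_nonneg hs)
    have hg' : Real.log (Real.Gamma (s + 1)) ≤ Real.log (m !) + t * Real.log ((m:ℝ) + 1) := by rw [htdef]; exact hg
    linarith [hg', fu, htS, htlog2, hMS, hMSe, hMt.le, hMt.ge, f2, ht1, f6, f6', hexp, htSnn]

lemma key_bound (p : ℝ) (hp2 : 2 ≤ p) (k : ℕ) (hk : 1 ≤ k) :
    |(1/p) * ((k:ℝ)*p/2 * Real.log (2/p) + Real.log (Real.Gamma ((k:ℝ)*p/2 + 1)))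
      - (1/2) * Real.log (k !) - ((1/2)*(1/p - 1/2)) * Real.log k
      - (1/(2*p)) * Real.log (p/2)| ≤ 3 := by
  have hp0 : (0:ℝ) < p := by linarith
  have hk1 : (1:ℝ) ≤ (k:ℝ) := by exact_mod_cast hk
  have hk0 : (0:ℝ) < (k:ℝ) := by linarith
  set s : ℝ := (k:ℝ)*p/2 with hsdef
  have hs1 : 1 ≤ s := by rw [hsdef]; nlinarith
  have hs0 : 0 < s := by linarith
  have hlogs : Real.log s = Real.log k + Real.log (p/2) := by
    rw [hsdef, show (k:ℝ)*p/2 = (k:ℝ)*(p/2) by ring,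
      Real.log_mul hk0.ne' (by positivity : (0:ℝ) < p/2).ne']
  have hlog2p : Real.log (2/p) = -Real.log (p/2) := by
    rw [show (2/p : ℝ) = (p/2)⁻¹ by field_simp, Real.log_inv]
  obtain ⟨hG1, hG2⟩ := gamma_phi_bounds s hs1
  obtain ⟨hF1, hF2⟩ := log_factorial_bounds k hk
  have hlog2k : Real.log (2*(k:ℝ)) = Real.log 2 + Real.log k :=
    Real.log_mul (by norm_num) hk0.ne'
  rw [hlog2k] at hF1 hF2
  have hl2a : (0:ℝ) ≤ Real.log 2 := Real.log_nonneg (by norm_num)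
  have hl2b : Real.log 2 ≤ 1 := by
    have := Real.log_two_lt_d9; linarith
  -- identity for the main cancellation
  have hid : (1/p) * (s * Real.log (2/p) + (s * Real.log s - s + (1/2) * Real.log s))
      - (1/2) * ((k:ℝ) * Real.log k - k + (1/2) * Real.log k)
      - ((1/2)*(1/p - 1/2)) * Real.log k - (1/(2*p)) * Real.log (p/2) = 0 := by
    rw [hlogs, hlog2p, hsdef]
    field_simp
    ring
  set EG : ℝ := Real.log (Real.Gamma (s+1)) - (s * Real.log s - s + (1/2) * Real.log s) with hEG
  set EF : ℝ := Real.log (k !) - ((k:ℝ) * Real.log k - k + (1/2) * Real.log k) with hEF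
  clear_value EG EF
  have hEGb1 : -4 ≤ EG := by rw [hEG]; linarith
  have hEGb2 : EG ≤ 4 := by rw [hEG]; linarith
  have hEFb1 : 0 ≤ EF := by rw [hEF]; linarith
  have hEFb2 : EF ≤ 2 := by rw [hEF]; linarith
  have hmain : (1/p) * (s * Real.log (2/p) + Real.log (Real.Gamma (s + 1)))
      - (1/2) * Real.log (k !) - ((1/2)*(1/p - 1/2)) * Real.log k
      - (1/(2*p)) * Real.log (p/2) = (1/p) * EG - (1/2) * EF := by
    linear_combination hid - (1/p) * hEG + (1/2) * hEF
  rw [hmain, abs_le]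
  have hip : (0:ℝ) < 1/p := by positivity
  have u1 : (1/p) * EG ≤ (1/p) * 4 := mul_le_mul_of_nonneg_left hEGb2 hip.le
  have u2 : (1/p) * (-4) ≤ (1/p) * EG := mul_le_mul_of_nonneg_left hEGb1 hip.le
  have u3 : (1/p) * 4 ≤ 2 := by rw [one_div, inv_mul_eq_div, div_le_iff₀ hp0]; linarith
  have u4 : -2 ≤ (1/p) * (-4) := by
    rw [one_div, inv_mul_eq_div, le_div_iff₀ hp0]; linarith
  constructor <;> linarith

lemma sq_rpow (w : ℂ) : Complex.normSq w = ‖w‖ ^ (2:ℝ) := by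
  rw [show ‖w‖ ^ (2:ℝ) = ‖w‖^(2:ℕ) by rw [← Real.rpow_natCast]; norm_num]
  rw [Complex.sq_norm]

lemma int_other (q : ℝ) (hq : 2 ≤ q) :
    ∫ w : ℂ, rexp (-(q/2) * Complex.normSq w) = π * (2/q) := by
  simp_rw [sq_rpow]
  rw [Complex.integral_exp_neg_mul_rpow (p := 2) (b := q/2) (by norm_num) (by linarith)]
  rw [show (-2/2 : ℝ) = -1 by norm_num, Real.rpow_neg_one, show (2/2 : ℝ) + 1 = 2 by norm_num,
    Real.Gamma_two]
  rw [inv_div]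
  ring

lemma int_j0 (k : ℕ) (q : ℝ) (hq : 2 ≤ q) :
    ∫ w : ℂ, ‖w‖ ^ ((k:ℝ)*q) * rexp (-(q/2) * Complex.normSq w)
      = π * (2/q) ^ ((k:ℝ)*q/2 + 1) * Real.Gamma ((k:ℝ)*q/2 + 1) := by
  have hkq : (-2:ℝ) < (k:ℝ)*q := lt_of_lt_of_le (by norm_num) (by positivity : (0:ℝ) ≤ (k:ℝ)*q)
  simp_rw [sq_rpow]
  rw [Complex.integral_rpow_mul_exp_neg_mul_rpow (p := 2) (q := (k:ℝ)*q) (b := q/2)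
    (by norm_num) hkq (by linarith)]
  have h1 : ((k:ℝ)*q + 2)/2 = (k:ℝ)*q/2 + 1 := by ring
  have h2 : (q/2 : ℝ) ^ (-((k:ℝ)*q + 2)/2) = (2/q) ^ ((k:ℝ)*q/2 + 1) := by
    rw [show (-((k:ℝ)*q + 2)/2 : ℝ) = -(((k:ℝ)*q/2) + 1) by ring, Real.rpow_neg (by linarith),
      ← Real.inv_rpow (by linarith), inv_div]
  rw [h1, h2]
  ring

lemma pointwise_eq (n k : ℕ) (j0 : Fin n) (q : ℝ) (hq : 2 ≤ q) (z : Fin n → ℂ) :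
    ‖(z j0)^k * Complex.exp (-(normSq2 n z : ℂ) / 2)‖ ^ q
    = ∏ j : Fin n, ((if j = j0 then ‖z j‖ ^ ((k:ℝ)*q) else 1) * rexp (-(q/2) * Complex.normSq (z j))) := by
  have hq0 : 0 < q := by linarith
  simp only [norm_mul, norm_pow, Complex.norm_exp]
  have hre : ((-(normSq2 n z : ℝ) : ℂ) / 2).re = -(normSq2 n z) / 2 := by simp
  rw [hre]
  rw [Real.mul_rpow (by positivity) (Real.exp_pos _).le]
  rw [← Real.rpow_natCast ‖z j0‖ k, ← Real.rpow_mul (norm_nonneg _)]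
  rw [Finset.prod_mul_distrib]
  congr 1
  · rw [show (∏ x : Fin n, if x = j0 then ‖z x‖ ^ ((k:ℝ) * q) else 1)
        = ‖z j0‖ ^ ((k:ℝ)*q) from by
      rw [Finset.prod_ite_eq' Finset.univ j0 (fun j => ‖z j‖ ^ ((k:ℝ)*q))]; simp]
  · rw [← Real.exp_sum, ← Real.exp_mul]
    congr 1
    show (-normSq2 n z)/2*q = _
    unfold normSq2
    rw [← Finset.sum_neg_distrib, Finset.sum_div, Finset.sum_mul]
    exact Finset.sum_congr rfl fun j _ => by ring

lemma integral_val (n k : ℕ) (j0 : Fin n) (q : ℝ) (hq : 2 ≤ q) :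
    ∫ z : Fin n → ℂ, ‖(z j0)^k * Complex.exp (-(normSq2 n z : ℂ) / 2)‖ ^ q
      = (π * (2/q) ^ ((k:ℝ)*q/2 + 1) * Real.Gamma ((k:ℝ)*q/2 + 1)) * (π * (2/q)) ^ (n - 1) := by
  simp_rw [pointwise_eq n k j0 q hq]
  rw [volume_pi, integral_fintype_prod_eq_prod (μ := fun _ => volume)
    (fun j w => (if j = j0 then ‖w‖ ^ ((k:ℝ)*q) else 1) * rexp (-(q/2) * Complex.normSq w))]
  have hfac : ∀ j : Fin n, (∫ w : ℂ, (if j = j0 then ‖w‖ ^ ((k:ℝ)*q) else 1) * rexp (-(q/2) * Complex.normSq w))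
      = if j = j0 then π * (2/q) ^ ((k:ℝ)*q/2 + 1) * Real.Gamma ((k:ℝ)*q/2 + 1) else π * (2/q) := by
    intro j
    by_cases h : j = j0
    · simp only [h, if_true]
      exact int_j0 k q hq
    · simp only [h, if_false, one_mul]
      exact int_other q hq
  simp_rw [hfac]
  rw [← Finset.mul_prod_erase Finset.univ _ (Finset.mem_univ j0), if_pos rfl]
  congr 1
  rw [Finset.prod_congr rfl (fun j hj => if_neg (Finset.ne_of_mem_erase hj)), Finset.prod_const,
    Finset.card_erase_of_mem (Finset.mem_univ j0), Finset.card_univ, Fintype.card_fin]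

theorem stmt3 (n : ℕ) (hn : 0 < n) (p : ℝ) (hp2 : 2 ≤ p) :
    ∃ c C : ℝ, 0 < c ∧ 0 < C ∧ ∀ k : ℕ, 1 ≤ k →
      c * (k : ℝ) ^ ((1/2 : ℝ) * (1/p - 1/2)) ≤
        Lpn n p (fun z => (z ⟨0, hn⟩) ^ k * Complex.exp (-(normSq2 n z : ℂ) / 2)) /
          Lpn n 2 (fun z => (z ⟨0, hn⟩) ^ k * Complex.exp (-(normSq2 n z : ℂ) / 2)) ∧
      Lpn n p (fun z => (z ⟨0, hn⟩) ^ k * Complex.exp (-(normSq2 n z : ℂ) / 2)) /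
          Lpn n 2 (fun z => (z ⟨0, hn⟩) ^ k * Complex.exp (-(normSq2 n z : ℂ) / 2)) ≤
        C * (k : ℝ) ^ ((1/2 : ℝ) * (1/p - 1/2)) := by
  have hp0 : (0:ℝ) < p := by linarith
  set j0 : Fin n := ⟨0, hn⟩
  set Ap : ℝ → ℕ → ℝ := fun q k =>
    (π * (2/q) ^ ((k:ℝ)*q/2 + 1) * Real.Gamma ((k:ℝ)*q/2 + 1)) * (π * (2/q)) ^ (n - 1)
    with hApdef
  have hpos : ∀ q : ℝ, 0 < q → ∀ k : ℕ, 0 < Ap q k := by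
    intro q hq k
    have h2q : (0:ℝ) < 2/q := by positivity
    have hΓ : 0 < Real.Gamma ((k:ℝ)*q/2 + 1) :=
      Real.Gamma_pos_of_pos (by positivity)
    exact mul_pos (mul_pos (mul_pos Real.pi_pos (Real.rpow_pos_of_pos h2q _)) hΓ)
      (pow_pos (mul_pos Real.pi_pos h2q) _)
  have hcast : ((n-1 : ℕ):ℝ) = (n:ℝ) - 1 := by
    rw [Nat.cast_sub hn]; norm_num
  have hlogAp : ∀ q : ℝ, 0 < q → ∀ k : ℕ, Real.log (Ap q k)
      = Real.log π + ((k:ℝ)*q/2+1) * Real.log (2/q)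
        + Real.log (Real.Gamma ((k:ℝ)*q/2+1)) + ((n:ℝ)-1) * (Real.log π + Real.log (2/q)) := by
    intro q hq k
    have h2q : (0:ℝ) < 2/q := by positivity
    have hΓ : 0 < Real.Gamma ((k:ℝ)*q/2 + 1) := Real.Gamma_pos_of_pos (by positivity)
    rw [hApdef]
    simp only
    rw [Real.log_mul (by positivity) (by positivity), Real.log_mul (by positivity) hΓ.ne',
      Real.log_mul Real.pi_pos.ne' (Real.rpow_pos_of_pos h2q _).ne', Real.log_rpow h2q,
      Real.log_pow, Real.log_mul Real.pi_pos.ne' h2q.ne', hcast]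
  have hval : ∀ q : ℝ, 2 ≤ q → ∀ k : ℕ,
      Lpn n q (fun z => (z j0) ^ k * Complex.exp (-(normSq2 n z : ℂ) / 2)) = (Ap q k) ^ (1/q) := by
    intro q hq k
    rw [Lpn, integral_val n k j0 q hq]
  have hlog2 : ∀ k : ℕ, Real.log (Ap 2 k) = Real.log π + Real.log (k !) + ((n:ℝ)-1) * Real.log π := by
    intro k
    rw [hlogAp 2 (by norm_num) k]
    have hkk : (k:ℝ)*2/2 = (k:ℝ) := by ring
    rw [show (2/2 : ℝ) = 1 by norm_num, Real.log_one, hkk, Real.Gamma_nat_eq_factorial]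
    ring
  set γ : ℝ := (1/2 : ℝ) * (1/p - 1/2) with hγdef
  set K : ℝ := (1/p) * (Real.log π + Real.log (2/p) + ((n:ℝ)-1) * (Real.log π + Real.log (2/p)))
      - (1/2) * (Real.log π + ((n:ℝ)-1) * Real.log π) + (1/(2*p)) * Real.log (p/2) with hKdef
  refine ⟨Real.exp (K - 3), Real.exp (K + 3), Real.exp_pos _, Real.exp_pos _, fun k hk => ?_⟩
  have hk0 : (0:ℝ) < (k:ℝ) := by exact_mod_cast hk
  set R : ℝ := Lpn n p (fun z => (z j0) ^ k * Complex.exp (-(normSq2 n z : ℂ) / 2)) /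
      Lpn n 2 (fun z => (z j0) ^ k * Complex.exp (-(normSq2 n z : ℂ) / 2)) with hRdef
  have hRval : R = (Ap p k) ^ (1/p) / (Ap 2 k) ^ (1/2 : ℝ) := by
    rw [hRdef, hval p hp2 k, hval 2 (le_refl 2) k]
  have hApp : 0 < Ap p k := hpos p hp0 k
  have hAp2 : 0 < Ap 2 k := hpos 2 (by norm_num) k
  have hRpos : 0 < R := by
    rw [hRval]
    exact div_pos (Real.rpow_pos_of_pos hApp _) (Real.rpow_pos_of_pos hAp2 _)
  have hlogR : Real.log R = (1/p) * Real.log (Ap p k) - (1/2) * Real.log (Ap 2 k) := by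
    rw [hRval, Real.log_div (Real.rpow_pos_of_pos hApp _).ne' (Real.rpow_pos_of_pos hAp2 _).ne',
      Real.log_rpow hApp, Real.log_rpow hAp2]
  have hbound : |Real.log R - γ * Real.log k - K| ≤ 3 := by
    have hkey := key_bound p hp2 k hk
    have heq : Real.log R - γ * Real.log k - K
        = (1/p) * ((k:ℝ)*p/2 * Real.log (2/p) + Real.log (Real.Gamma ((k:ℝ)*p/2 + 1)))
          - (1/2) * Real.log (k !) - ((1/2)*(1/p - 1/2)) * Real.log k
          - (1/(2*p)) * Real.log (p/2) := by
      rw [hlogR, hlogAp p hp0 k, hlog2 k, hγdef, hKdef]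
      ring
    rw [heq]
    exact hkey
  rw [abs_le] at hbound
  have hrpow : (k:ℝ) ^ γ = Real.exp (γ * Real.log k) := by
    rw [Real.rpow_def_of_pos hk0, mul_comm]
  have hR : R = Real.exp (Real.log R) := (Real.exp_log hRpos).symm
  constructor
  · show Real.exp (K - 3) * (k:ℝ) ^ γ ≤ R
    rw [hrpow, ← Real.exp_add, hR]
    exact Real.exp_le_exp.mpr (by linarith)
  · show R ≤ Real.exp (K + 3) * (k:ℝ) ^ γ
    rw [hrpow, ← Real.exp_add, hR]
    exact Real.exp_le_exp.mpr (by linarith)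
end

section
/- For multi-indices α, β ∈ ℕ^n, the function f_{α,β}(z) = (−1)^{|α|+|β|} e^{|z|²/2} ∂_z^α ∂_{z̄}^β e^{−|z|²} on ℂ^n satisfies L f_{α,β} = (n + 2|α|) f_{α,β}, where L is the twisted Laplacian. -/
open MeasureTheory Complex Real

noncomputable section Aux
namespace TL9
open Complex Function

variable {n : ℕ}

abbrev FF (n : ℕ) := (Fin n → ℂ) → ℂ

def Sm {n : ℕ} (f : FF n) : Prop := ContDiff ℝ ((⊤:ℕ∞) : WithTop ℕ∞) f

lemma two_le_inf : (2 : WithTop ℕ∞) ≤ ((⊤:ℕ∞) : WithTop ℕ∞) := by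
  rw [show (2 : WithTop ℕ∞) = ((2:ℕ∞):WithTop ℕ∞) by norm_cast]
  exact WithTop.coe_le_coe.mpr le_top

lemma one_le_inf : (1 : WithTop ℕ∞) ≤ ((⊤:ℕ∞) : WithTop ℕ∞) := by
  rw [show (1 : WithTop ℕ∞) = ((1:ℕ∞):WithTop ℕ∞) by norm_cast]
  exact WithTop.coe_le_coe.mpr le_top

lemma Sm.diff {f : FF n} (hf : Sm f) : Differentiable ℝ f := hf.differentiable (by simp)

lemma Sm.dAt {f : FF n} (hf : Sm f) (z : Fin n → ℂ) : DifferentiableAt ℝ f z := hf.diff z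

def Pd {n : ℕ} (j : Fin n) (v : ℂ) (f : FF n) : FF n := fun z => fderiv ℝ f z (Pi.single j v)

lemma Sm.fderivSm {f : FF n} (hf : Sm f) : ContDiff ℝ ((⊤:ℕ∞) : WithTop ℕ∞) (fderiv ℝ f) :=
  hf.fderiv_right (by norm_cast)

lemma Sm.pd {f : FF n} (hf : Sm f) (j : Fin n) (v : ℂ) : Sm (Pd j v f) := by
  have h := (ContinuousLinearMap.apply ℝ ℂ (Pi.single j v)).contDiff.comp hf.fderivSm
  have heq : Pd j v f = ⇑(ContinuousLinearMap.apply ℝ ℂ (Pi.single j v)) ∘ fderiv ℝ f := by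
    funext z; simp [Pd, Function.comp]
  rw [Sm, heq]; exact h

lemma Sm.symm2 {f : FF n} (hf : Sm f) (z : Fin n → ℂ) : IsSymmSndFDerivAt ℝ f z :=
  hf.contDiffAt.isSymmSndFDerivAt (by rw [minSmoothness_of_isRCLikeNormedField]; exact two_le_inf)

lemma Pd_eval2 {f : FF n} (hf : Sm f) (j k : Fin n) (v w : ℂ) (z : Fin n → ℂ) :
    Pd j v (Pd k w f) z = (fderiv ℝ (fderiv ℝ f) z (Pi.single j v)) (Pi.single k w) := by
  have hd : DifferentiableAt ℝ (fderiv ℝ f) z := hf.fderivSm.differentiable (by simp) z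
  show fderiv ℝ (fun y => (fderiv ℝ f y) (Pi.single k w)) z (Pi.single j v) = _
  rw [fderiv_clm_apply hd (differentiableAt_const _)]
  simp

lemma Pd_comm {f : FF n} (hf : Sm f) (j k : Fin n) (v w : ℂ) (z : Fin n → ℂ) :
    Pd j v (Pd k w f) z = Pd k w (Pd j v f) z := by
  rw [Pd_eval2 hf, Pd_eval2 hf]; exact hf.symm2 z _ _

lemma Pd_add {f g : FF n} {z : Fin n → ℂ} (hf : DifferentiableAt ℝ f z)
    (hg : DifferentiableAt ℝ g z) (j : Fin n) (v : ℂ) :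
    Pd j v (fun w => f w + g w) z = Pd j v f z + Pd j v g z := by
  simp [Pd, fderiv_fun_add hf hg]

lemma Pd_sub {f g : FF n} {z : Fin n → ℂ} (hf : DifferentiableAt ℝ f z)
    (hg : DifferentiableAt ℝ g z) (j : Fin n) (v : ℂ) :
    Pd j v (fun w => f w - g w) z = Pd j v f z - Pd j v g z := by
  simp [Pd, fderiv_fun_sub hf hg]

lemma Pd_const_mul {g : FF n} {z : Fin n → ℂ} (hg : DifferentiableAt ℝ g z) (c : ℂ)
    (j : Fin n) (v : ℂ) : Pd j v (fun w => c * g w) z = c * Pd j v g z := by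
  simp [Pd, fderiv_const_mul hg c]

lemma Pd_mul {f g : FF n} {z : Fin n → ℂ} (hf : DifferentiableAt ℝ f z)
    (hg : DifferentiableAt ℝ g z) (j : Fin n) (v : ℂ) :
    Pd j v (fun w => f w * g w) z = f z * Pd j v g z + g z * Pd j v f z := by
  simp [Pd, fderiv_fun_mul hf hg, smul_eq_mul]

lemma Pd_sum {ι : Type*} {s : Finset ι} {g : ι → FF n} {z : Fin n → ℂ}
    (h : ∀ i ∈ s, DifferentiableAt ℝ (g i) z) (j : Fin n) (v : ℂ) :
    Pd j v (fun w => ∑ i ∈ s, g i w) z = ∑ i ∈ s, Pd j v (g i) z := by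
  simp [Pd, fderiv_fun_sum h]

lemma Pd_const (c : ℂ) (j : Fin n) (v : ℂ) (z : Fin n → ℂ) :
    Pd j v (fun _ => c) z = 0 := by simp [Pd]

lemma Pd_coord (j k : Fin n) (v : ℂ) (z : Fin n → ℂ) :
    Pd j v (fun w => w k) z = if k = j then v else 0 := by
  have : (fun w : Fin n → ℂ => w k) = (ContinuousLinearMap.proj (R := ℝ) (φ := fun _ : Fin n => ℂ) k) := rfl
  rw [Pd, this, ContinuousLinearMap.fderiv]
  simp [Pi.single_apply]

lemma Pd_conj_coord (j k : Fin n) (v : ℂ) (z : Fin n → ℂ) :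
    Pd j v (fun w => (starRingEnd ℂ) (w k)) z = if k = j then (starRingEnd ℂ) v else 0 := by
  have : (fun w : Fin n → ℂ => (starRingEnd ℂ) (w k)) =
      ⇑((Complex.conjCLE : ℂ ≃L[ℝ] ℂ).toContinuousLinearMap.comp
        (ContinuousLinearMap.proj (R := ℝ) (φ := fun _ : Fin n => ℂ) k)) := rfl
  rw [Pd, this, ContinuousLinearMap.fderiv]
  simp [Pi.single_apply]
  split <;> simp

lemma sm_coord (k : Fin n) : Sm (fun w : Fin n → ℂ => w k) :=
  (ContinuousLinearMap.proj (R := ℝ) (φ := fun _ : Fin n => ℂ) k).contDiff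

lemma sm_conj_coord (k : Fin n) : Sm (fun w : Fin n → ℂ => (starRingEnd ℂ) (w k)) :=
  ((Complex.conjCLE : ℂ ≃L[ℝ] ℂ).toContinuousLinearMap.comp
        (ContinuousLinearMap.proj (R := ℝ) (φ := fun _ : Fin n => ℂ) k)).contDiff

lemma Sm.mul {f g : FF n} (hf : Sm f) (hg : Sm g) : Sm (fun w => f w * g w) := ContDiff.mul hf hg
lemma Sm.add {f g : FF n} (hf : Sm f) (hg : Sm g) : Sm (fun w => f w + g w) := ContDiff.add hf hg
lemma Sm.sub {f g : FF n} (hf : Sm f) (hg : Sm g) : Sm (fun w => f w - g w) := ContDiff.sub hf hg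
lemma sm_const (c : ℂ) : Sm (fun _ : Fin n → ℂ => c) := contDiff_const
lemma Sm.cmul {g : FF n} (hg : Sm g) (c : ℂ) : Sm (fun w => c * g w) := (sm_const c).mul hg

lemma hasFDerivAt_normSq (w : ℂ) :
    HasFDerivAt Complex.normSq ((2*w.re) • Complex.reCLM + (2*w.im) • Complex.imCLM) w := by
  have h1 := (Complex.reCLM.hasFDerivAt (x := w)).mul (Complex.reCLM.hasFDerivAt (x := w))
  have h2 := (Complex.imCLM.hasFDerivAt (x := w)).mul (Complex.imCLM.hasFDerivAt (x := w))
  have h := h1.add h2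
  have he : Complex.normSq = fun y : ℂ => Complex.reCLM y * Complex.reCLM y + Complex.imCLM y * Complex.imCLM y := by
    funext y; simp [Complex.normSq_apply]
  rw [he]; refine h.congr_fderiv ?_; ext u; simp; ring

def Dq (n : ℕ) (z : Fin n → ℂ) : (Fin n → ℂ) →L[ℝ] ℝ :=
  ∑ j : Fin n, ((2*(z j).re) • Complex.reCLM + (2*(z j).im) • Complex.imCLM).comp
    (ContinuousLinearMap.proj (R := ℝ) (φ := fun _ : Fin n => ℂ) j)

lemma hasFDerivAt_normSq2 (z : Fin n → ℂ) : HasFDerivAt (normSq2 n) (Dq n z) z :=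
  HasFDerivAt.fun_sum (fun j (_ : j ∈ Finset.univ) =>
    ((hasFDerivAt_normSq (z j)).comp z
      ((ContinuousLinearMap.proj (R := ℝ) (φ := fun _ : Fin n => ℂ) j).hasFDerivAt)))

lemma Dq_apply (z : Fin n → ℂ) (j : Fin n) (v : ℂ) :
    Dq n z (Pi.single j v) = 2*(z j).re*v.re + 2*(z j).im*v.im := by
  rw [Dq, ContinuousLinearMap.sum_apply]
  have : ∀ k : Fin n, (((2*(z k).re) • Complex.reCLM + (2*(z k).im) • Complex.imCLM).comp
    (ContinuousLinearMap.proj (R := ℝ) (φ := fun _ : Fin n => ℂ) k)) (Pi.single j v)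
      = if k = j then 2*(z k).re*v.re + 2*(z k).im*v.im else 0 := by
    intro k
    simp [Pi.single_apply, ContinuousLinearMap.proj_apply]
    split <;> simp_all
  simp only [this]
  simp

lemma hasFDerivAt_exp_cq (c : ℂ) (z : Fin n → ℂ) :
    HasFDerivAt (fun w => Complex.exp (c * (normSq2 n w : ℂ)))
      ((Complex.exp (c * (normSq2 n z : ℂ)) * c) • (Complex.ofRealCLM.comp (Dq n z))) z := by
  have h1 : HasFDerivAt (fun w => ((normSq2 n w : ℝ) : ℂ)) (Complex.ofRealCLM.comp (Dq n z)) z :=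
    (Complex.ofRealCLM.hasFDerivAt).comp z (hasFDerivAt_normSq2 z)
  have h2 : HasFDerivAt (fun w => c * ((normSq2 n w : ℝ) : ℂ)) (c • (Complex.ofRealCLM.comp (Dq n z))) z :=
    h1.const_mul c
  have h3 := (Complex.hasDerivAt_exp (c * (normSq2 n z : ℂ)))
  have h4 := h3.comp_hasFDerivAt z h2
  refine h4.congr_fderiv ?_
  rw [smul_smul]

lemma Pd_exp_cq (c : ℂ) (j : Fin n) (v : ℂ) (z : Fin n → ℂ) :
    Pd j v (fun w => Complex.exp (c * (normSq2 n w : ℂ))) z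
      = c * ((2*(z j).re*v.re + 2*(z j).im*v.im : ℝ) : ℂ) * Complex.exp (c * (normSq2 n z : ℂ)) := by
  rw [Pd, (hasFDerivAt_exp_cq c z).fderiv]
  simp [Dq_apply]
  ring

lemma sm_normSq2 : ContDiff ℝ ((⊤:ℕ∞) : WithTop ℕ∞) (normSq2 n) := by
  have : (normSq2 n) = fun z : Fin n → ℂ => ∑ j : Fin n, Complex.normSq (z j) := rfl
  rw [this]
  apply ContDiff.sum
  intro j _
  have he : (fun z : Fin n → ℂ => Complex.normSq (z j)) =
      (fun y : ℂ => Complex.reCLM y * Complex.reCLM y + Complex.imCLM y * Complex.imCLM y) ∘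
        (fun z : Fin n → ℂ => z j) := by
    funext y; simp [Complex.normSq_apply]
  rw [he]
  exact ((Complex.reCLM.contDiff.mul Complex.reCLM.contDiff).add
    (Complex.imCLM.contDiff.mul Complex.imCLM.contDiff)).comp
    (ContinuousLinearMap.proj (R := ℝ) (φ := fun _ : Fin n => ℂ) j).contDiff

lemma sm_exp_cq (c : ℂ) : Sm (fun w : Fin n → ℂ => Complex.exp (c * (normSq2 n w : ℂ))) :=
  (Complex.contDiff_exp (𝕜 := ℝ)).comp
    (contDiff_const.mul (Complex.ofRealCLM.contDiff.comp sm_normSq2))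

-- ### wz / wzb level
lemma wz_eq (j : Fin n) (f : FF n) (z : Fin n → ℂ) :
    wz n j f z = (1/2 : ℂ) * (Pd j 1 f z - Complex.I * Pd j Complex.I f z) := rfl

lemma wzb_eq (j : Fin n) (f : FF n) (z : Fin n → ℂ) :
    wzb n j f z = (1/2 : ℂ) * (Pd j 1 f z + Complex.I * Pd j Complex.I f z) := rfl

lemma Sm.wzS {f : FF n} (hf : Sm f) (j : Fin n) : Sm (_root_.wz n j f) := by
  have : _root_.wz n j f = fun z => (1/2 : ℂ) * (Pd j 1 f z - Complex.I * Pd j Complex.I f z) := rfl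
  rw [this]
  exact ((hf.pd j 1).sub ((hf.pd j Complex.I).cmul Complex.I)).cmul _

lemma Sm.wzbS {f : FF n} (hf : Sm f) (j : Fin n) : Sm (_root_.wzb n j f) := by
  have : _root_.wzb n j f = fun z => (1/2 : ℂ) * (Pd j 1 f z + Complex.I * Pd j Complex.I f z) := rfl
  rw [this]
  exact ((hf.pd j 1).add ((hf.pd j Complex.I).cmul Complex.I)).cmul _

lemma wz_add {f g : FF n} {z : Fin n → ℂ} (hf : DifferentiableAt ℝ f z)
    (hg : DifferentiableAt ℝ g z) (j : Fin n) :
    wz n j (fun w => f w + g w) z = wz n j f z + wz n j g z := by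
  simp only [wz_eq, Pd_add hf hg]; ring

lemma wzb_add {f g : FF n} {z : Fin n → ℂ} (hf : DifferentiableAt ℝ f z)
    (hg : DifferentiableAt ℝ g z) (j : Fin n) :
    wzb n j (fun w => f w + g w) z = wzb n j f z + wzb n j g z := by
  simp only [wzb_eq, Pd_add hf hg]; ring

lemma wz_sub {f g : FF n} {z : Fin n → ℂ} (hf : DifferentiableAt ℝ f z)
    (hg : DifferentiableAt ℝ g z) (j : Fin n) :
    _root_.wz n j (fun w => f w - g w) z = _root_.wz n j f z - _root_.wz n j g z := by
  simp only [wz_eq, Pd_sub hf hg]; ring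

lemma wzb_sub {f g : FF n} {z : Fin n → ℂ} (hf : DifferentiableAt ℝ f z)
    (hg : DifferentiableAt ℝ g z) (j : Fin n) :
    _root_.wzb n j (fun w => f w - g w) z = _root_.wzb n j f z - _root_.wzb n j g z := by
  simp only [wzb_eq, Pd_sub hf hg]; ring

lemma wz_cmul {g : FF n} {z : Fin n → ℂ} (hg : DifferentiableAt ℝ g z) (c : ℂ) (j : Fin n) :
    wz n j (fun w => c * g w) z = c * wz n j g z := by
  simp only [wz_eq, Pd_const_mul hg]; ring

lemma wzb_cmul {g : FF n} {z : Fin n → ℂ} (hg : DifferentiableAt ℝ g z) (c : ℂ) (j : Fin n) :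
    wzb n j (fun w => c * g w) z = c * wzb n j g z := by
  simp only [wzb_eq, Pd_const_mul hg]; ring

lemma wz_mul {f g : FF n} {z : Fin n → ℂ} (hf : DifferentiableAt ℝ f z)
    (hg : DifferentiableAt ℝ g z) (j : Fin n) :
    wz n j (fun w => f w * g w) z = f z * wz n j g z + g z * wz n j f z := by
  simp only [wz_eq, Pd_mul hf hg]; ring

lemma wzb_mul {f g : FF n} {z : Fin n → ℂ} (hf : DifferentiableAt ℝ f z)
    (hg : DifferentiableAt ℝ g z) (j : Fin n) :
    wzb n j (fun w => f w * g w) z = f z * wzb n j g z + g z * wzb n j f z := by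
  simp only [wzb_eq, Pd_mul hf hg]; ring

lemma wz_sum {ι : Type*} {s : Finset ι} {g : ι → FF n} {z : Fin n → ℂ}
    (h : ∀ i ∈ s, DifferentiableAt ℝ (g i) z) (j : Fin n) :
    wz n j (fun w => ∑ i ∈ s, g i w) z = ∑ i ∈ s, wz n j (g i) z := by
  simp only [wz_eq, Pd_sum h]
  rw [Finset.mul_sum, ← Finset.sum_sub_distrib, Finset.mul_sum]

lemma wzb_sum {ι : Type*} {s : Finset ι} {g : ι → FF n} {z : Fin n → ℂ}
    (h : ∀ i ∈ s, DifferentiableAt ℝ (g i) z) (j : Fin n) :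
    wzb n j (fun w => ∑ i ∈ s, g i w) z = ∑ i ∈ s, wzb n j (g i) z := by
  simp only [wzb_eq, Pd_sum h]
  rw [Finset.mul_sum, ← Finset.sum_add_distrib, Finset.mul_sum]

lemma wz_const (c : ℂ) (j : Fin n) (z : Fin n → ℂ) : wz n j (fun _ => c) z = 0 := by
  simp [wz_eq, Pd_const]

lemma wzb_const (c : ℂ) (j : Fin n) (z : Fin n → ℂ) : wzb n j (fun _ => c) z = 0 := by
  simp [wzb_eq, Pd_const]

lemma wz_coord (j k : Fin n) (z : Fin n → ℂ) :
    wz n j (fun w => w k) z = if k = j then 1 else 0 := by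
  simp only [wz_eq, Pd_coord]
  split
  · simp [Complex.I_mul_I]; try ring
  · simp

lemma wzb_coord (j k : Fin n) (z : Fin n → ℂ) :
    wzb n j (fun w => w k) z = 0 := by
  simp only [wzb_eq, Pd_coord]
  split
  · simp [Complex.I_mul_I]; try ring
  · simp

lemma wz_conj_coord (j k : Fin n) (z : Fin n → ℂ) :
    wz n j (fun w => (starRingEnd ℂ) (w k)) z = 0 := by
  simp only [wz_eq, Pd_conj_coord]
  split
  · simp [Complex.I_mul_I]; try ring
  · simp

lemma wzb_conj_coord (j k : Fin n) (z : Fin n → ℂ) :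
    wzb n j (fun w => (starRingEnd ℂ) (w k)) z = if k = j then 1 else 0 := by
  simp only [wzb_eq, Pd_conj_coord]
  split
  · simp [Complex.I_mul_I]; try ring
  · simp

lemma conj_eq' (w : ℂ) : (starRingEnd ℂ) w = (w.re:ℂ) - (w.im:ℂ)*Complex.I := by
  simp [Complex.ext_iff]

lemma coord_eq' (w : ℂ) : w = (w.re:ℂ) + (w.im:ℂ)*Complex.I := (Complex.re_add_im w).symm

lemma wz_exp_cq (c : ℂ) (j : Fin n) (z : Fin n → ℂ) :
    wz n j (fun w => Complex.exp (c * (normSq2 n w : ℂ))) z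
      = c * ((starRingEnd ℂ) (z j)) * Complex.exp (c * (normSq2 n z : ℂ)) := by
  rw [wz_eq, Pd_exp_cq, Pd_exp_cq, conj_eq' (z j)]
  push_cast
  simp [Complex.I_re, Complex.I_im]
  ring

lemma wzb_exp_cq (c : ℂ) (j : Fin n) (z : Fin n → ℂ) :
    wzb n j (fun w => Complex.exp (c * (normSq2 n w : ℂ))) z
      = c * (z j) * Complex.exp (c * (normSq2 n z : ℂ)) := by
  rw [wzb_eq, Pd_exp_cq, Pd_exp_cq]
  simp only [Complex.one_re, Complex.one_im, Complex.I_re, Complex.I_im]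
  push_cast
  linear_combination (-(c * Complex.exp (c * (normSq2 n z : ℂ)))) * coord_eq' (z j)

-- second-order commutation
lemma wz_wz_comm {f : FF n} (hf : Sm f) (j k : Fin n) (z : Fin n → ℂ) :
    wz n j (wz n k f) z = wz n k (wz n j f) z := by
  have h1 : DifferentiableAt ℝ (Pd k 1 f) z := (hf.pd k 1).dAt z
  have h2 : DifferentiableAt ℝ (Pd k Complex.I f) z := (hf.pd k Complex.I).dAt z
  have h3 : DifferentiableAt ℝ (Pd j 1 f) z := (hf.pd j 1).dAt z
  have h4 : DifferentiableAt ℝ (Pd j Complex.I f) z := (hf.pd j Complex.I).dAt z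
  have e : ∀ (a b : Fin n) (v : ℂ), wz n a (wz n b f) z =
      (1/2:ℂ) * ((1/2:ℂ) * (Pd a v (Pd b 1 f) z * 0 + 0) - 0) → True := fun _ _ _ _ => trivial
  clear e
  have key : ∀ (a b : Fin n) (u v : ℂ), Pd a u (Pd b v f) z = Pd b v (Pd a u f) z :=
    fun a b u v => Pd_comm hf a b u v z
  have expand : ∀ (a b : Fin n), wz n a (wz n b f) z =
      (1/2:ℂ) * ((1/2:ℂ) * (Pd a 1 (Pd b 1 f) z - Complex.I * Pd a 1 (Pd b Complex.I f) z)
        - Complex.I * ((1/2:ℂ) * (Pd a Complex.I (Pd b 1 f) z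
          - Complex.I * Pd a Complex.I (Pd b Complex.I f) z))) := by
    intro a b
    have hwz : wz n b f = fun w => (1/2:ℂ) * (Pd b 1 f w - Complex.I * Pd b Complex.I f w) := rfl
    have hb1 : DifferentiableAt ℝ (Pd b 1 f) z := (hf.pd b 1).dAt z
    have hb2 : DifferentiableAt ℝ (Pd b Complex.I f) z := (hf.pd b Complex.I).dAt z
    rw [wz_eq, hwz]
    rw [Pd_const_mul (by exact hb1.sub (hb2.const_mul _)),
        Pd_const_mul (by exact hb1.sub (hb2.const_mul _)),
        Pd_sub hb1 (hb2.const_mul _), Pd_sub hb1 (hb2.const_mul _),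
        Pd_const_mul hb2, Pd_const_mul hb2]
  rw [expand j k, expand k j]
  rw [key j k 1 1, key j k 1 Complex.I, key j k Complex.I 1, key j k Complex.I Complex.I]
  ring

-- ### generic commutation
lemma wz_fun_eq (j : Fin n) (f : FF n) :
    _root_.wz n j f = fun w => (1/2:ℂ) * (Pd j 1 f w + (-Complex.I) * Pd j Complex.I f w) := by
  funext w; rw [wz_eq]; ring

lemma wzb_fun_eq (j : Fin n) (f : FF n) :
    _root_.wzb n j f = fun w => (1/2:ℂ) * (Pd j 1 f w + Complex.I * Pd j Complex.I f w) := rfl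

lemma W_comm (s t : ℂ) {f : FF n} (hf : Sm f) (j k : Fin n) (z : Fin n → ℂ) :
    (1/2:ℂ) * (Pd j 1 (fun w => (1/2:ℂ)*(Pd k 1 f w + t * Pd k Complex.I f w)) z
       + s * Pd j Complex.I (fun w => (1/2:ℂ)*(Pd k 1 f w + t * Pd k Complex.I f w)) z)
    = (1/2:ℂ) * (Pd k 1 (fun w => (1/2:ℂ)*(Pd j 1 f w + s * Pd j Complex.I f w)) z
       + t * Pd k Complex.I (fun w => (1/2:ℂ)*(Pd j 1 f w + s * Pd j Complex.I f w)) z) := by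
  have hk1 : DifferentiableAt ℝ (Pd k 1 f) z := (hf.pd k 1).dAt z
  have hk2 : DifferentiableAt ℝ (Pd k Complex.I f) z := (hf.pd k Complex.I).dAt z
  have hj1 : DifferentiableAt ℝ (Pd j 1 f) z := (hf.pd j 1).dAt z
  have hj2 : DifferentiableAt ℝ (Pd j Complex.I f) z := (hf.pd j Complex.I).dAt z
  rw [Pd_const_mul (hk1.fun_add (hk2.const_mul t)), Pd_const_mul (hk1.fun_add (hk2.const_mul t)),
      Pd_const_mul (hj1.fun_add (hj2.const_mul s)), Pd_const_mul (hj1.fun_add (hj2.const_mul s)),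
      Pd_add hk1 (hk2.const_mul t), Pd_add hk1 (hk2.const_mul t),
      Pd_add hj1 (hj2.const_mul s), Pd_add hj1 (hj2.const_mul s),
      Pd_const_mul hk2, Pd_const_mul hk2, Pd_const_mul hj2, Pd_const_mul hj2]
  rw [Pd_comm hf j k 1 1 z, Pd_comm hf j k 1 Complex.I z,
      Pd_comm hf j k Complex.I 1 z, Pd_comm hf j k Complex.I Complex.I z]
  ring

lemma wz_wzb_comm {f : FF n} (hf : Sm f) (j k : Fin n) (z : Fin n → ℂ) :
    _root_.wz n j (_root_.wzb n k f) z = _root_.wzb n k (_root_.wz n j f) z := by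
  simp only [wz_fun_eq, wzb_fun_eq]
  exact W_comm (-Complex.I) Complex.I hf j k z

lemma wzb_wzb_comm {f : FF n} (hf : Sm f) (j k : Fin n) (z : Fin n → ℂ) :
    _root_.wzb n j (_root_.wzb n k f) z = _root_.wzb n k (_root_.wzb n j f) z := by
  simp only [wzb_fun_eq]
  exact W_comm Complex.I Complex.I hf j k z

lemma wz_wz_comm' {f : FF n} (hf : Sm f) (j k : Fin n) (z : Fin n → ℂ) :
    _root_.wz n j (_root_.wz n k f) z = _root_.wz n k (_root_.wz n j f) z := by
  simp only [wz_fun_eq]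
  exact W_comm (-Complex.I) (-Complex.I) hf j k z

-- function-level versions
lemma wz_wz_fun {f : FF n} (hf : Sm f) (j k : Fin n) :
    _root_.wz n j (_root_.wz n k f) = _root_.wz n k (_root_.wz n j f) :=
  funext fun z => wz_wz_comm' hf j k z

lemma wz_wzb_fun {f : FF n} (hf : Sm f) (j k : Fin n) :
    _root_.wz n j (_root_.wzb n k f) = _root_.wzb n k (_root_.wz n j f) :=
  funext fun z => wz_wzb_comm hf j k z

lemma wzb_wzb_fun {f : FF n} (hf : Sm f) (j k : Fin n) :
    _root_.wzb n j (_root_.wzb n k f) = _root_.wzb n k (_root_.wzb n j f) :=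
  funext fun z => wzb_wzb_comm hf j k z

-- ### fold machinery
section FoldSec

def Fold (O : Fin n → FF n → FF n) (m : Fin n → ℕ) (l : List (Fin n)) (f : FF n) : FF n :=
  l.foldr (fun j g => (O j)^[m j] g) f

variable {O : Fin n → FF n → FF n}

lemma sm_iter (hS : ∀ (j : Fin n) (f : FF n), Sm f → Sm (O j f)) {f : FF n} (hf : Sm f)
    (j : Fin n) (k : ℕ) : Sm ((O j)^[k] f) := by
  induction k with
  | zero => simpa using hf
  | succ k ih => rw [Function.iterate_succ_apply']; exact hS j _ ih

lemma sm_fold (hS : ∀ (j : Fin n) (f : FF n), Sm f → Sm (O j f)) {f : FF n} (hf : Sm f)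
    (m : Fin n → ℕ) (l : List (Fin n)) : Sm (Fold O m l f) := by
  induction l with
  | nil => simpa [Fold] using hf
  | cons a l ih => exact sm_iter hS ih a (m a)

lemma iter_comm (hS : ∀ (j : Fin n) (f : FF n), Sm f → Sm (O j f)) (P : FF n → FF n)
    (hcomm : ∀ (j : Fin n) (f : FF n), Sm f → P (O j f) = O j (P f))
    {f : FF n} (hf : Sm f) (j : Fin n) (k : ℕ) :
    P ((O j)^[k] f) = (O j)^[k] (P f) := by
  induction k with
  | zero => simp
  | succ k ih =>
    rw [Function.iterate_succ_apply', Function.iterate_succ_apply',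
      hcomm j _ (sm_iter hS hf j k), ih]

lemma fold_comm (hS : ∀ (j : Fin n) (f : FF n), Sm f → Sm (O j f)) (P : FF n → FF n)
    (hcomm : ∀ (j : Fin n) (f : FF n), Sm f → P (O j f) = O j (P f))
    {f : FF n} (hf : Sm f) (m : Fin n → ℕ) (l : List (Fin n)) :
    P (Fold O m l f) = Fold O m l (P f) := by
  induction l with
  | nil => simp [Fold]
  | cons a l ih =>
    show P ((O a)^[m a] (Fold O m l f)) = (O a)^[m a] (Fold O m l (P f))
    rw [iter_comm hS P hcomm (sm_fold hS hf m l) a (m a), ih]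

lemma fold_congr {m m' : Fin n → ℕ} (l : List (Fin n)) (h : ∀ j ∈ l, m j = m' j) (f : FF n) :
    Fold O m l f = Fold O m' l f := by
  induction l with
  | nil => rfl
  | cons a l ih =>
    show (O a)^[m a] (Fold O m l f) = (O a)^[m' a] (Fold O m' l f)
    rw [h a (List.mem_cons_self), ih (fun j hj => h j (List.mem_cons_of_mem a hj))]

lemma fold_zero {m : Fin n → ℕ} (l : List (Fin n)) (h : ∀ j ∈ l, m j = 0) (f : FF n) :
    Fold O m l f = f := by
  induction l with
  | nil => rfl
  | cons a l ih =>
    show (O a)^[m a] (Fold O m l f) = f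
    rw [h a (List.mem_cons_self), ih (fun j hj => h j (List.mem_cons_of_mem a hj))]
    rfl

lemma fold_update_succ (hS : ∀ (j : Fin n) (f : FF n), Sm f → Sm (O j f))
    (hOO : ∀ (j k : Fin n) (f : FF n), Sm f → O j (O k f) = O k (O j f))
    {m : Fin n → ℕ} {l : List (Fin n)} (hl : l.Nodup) {j : Fin n}
    (hj : j ∈ l) {f : FF n} (hf : Sm f) :
    Fold O (Function.update m j (m j + 1)) l f = O j (Fold O m l f) := by
  induction l with
  | nil => simp at hj
  | cons a l ih =>
    rcases List.mem_cons.1 hj with rfl | hjl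
    · have hnotin : j ∉ l := (List.nodup_cons.1 hl).1
      show (O j)^[Function.update m j (m j + 1) j] (Fold O (Function.update m j (m j + 1)) l f)
        = O j ((O j)^[m j] (Fold O m l f))
      rw [Function.update_self]
      rw [fold_congr (m := Function.update m j (m j + 1)) (m' := m) l
        (fun k hk => Function.update_of_ne (fun h : k = j => hnotin (h ▸ hk)) _ _) f]
      rw [Function.iterate_succ_apply']
    · have ha : a ≠ j := by
        rintro rfl; exact (List.nodup_cons.1 hl).1 hjl
      show (O a)^[Function.update m j (m j + 1) a] (Fold O (Function.update m j (m j + 1)) l f)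
        = O j ((O a)^[m a] (Fold O m l f))
      rw [Function.update_of_ne ha]
      rw [ih (List.nodup_cons.1 hl).2 hjl]
      rw [iter_comm hS (O j) (fun k g hg => hOO j k g hg) (sm_fold hS hf m l) a (m a)]
end FoldSec

lemma wzMulti_eq (m : Fin n → ℕ) (f : FF n) :
    wzMulti n m f = Fold (fun j => _root_.wz n j) m (List.finRange n) f := rfl

lemma wzbMulti_eq (m : Fin n → ℕ) (f : FF n) :
    wzbMulti n m f = Fold (fun j => _root_.wzb n j) m (List.finRange n) f := rfl

lemma hS_wz : ∀ (j : Fin n) (f : FF n), Sm f → Sm ((fun j => _root_.wz n j) j f) :=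
  fun j f hf => hf.wzS j

lemma hS_wzb : ∀ (j : Fin n) (f : FF n), Sm f → Sm ((fun j => _root_.wzb n j) j f) :=
  fun j f hf => hf.wzbS j

lemma sm_wzMulti {f : FF n} (hf : Sm f) (m : Fin n → ℕ) : Sm (wzMulti n m f) := by
  rw [wzMulti_eq]; exact sm_fold hS_wz hf m _

lemma sm_wzbMulti {f : FF n} (hf : Sm f) (m : Fin n → ℕ) : Sm (wzbMulti n m f) := by
  rw [wzbMulti_eq]; exact sm_fold hS_wzb hf m _

lemma wzMulti_succ {f : FF n} (hf : Sm f) (m : Fin n → ℕ) (j : Fin n) :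
    wzMulti n (Function.update m j (m j + 1)) f = _root_.wz n j (wzMulti n m f) := by
  rw [wzMulti_eq, wzMulti_eq]
  exact fold_update_succ hS_wz (fun a b g hg => wz_wz_fun hg a b)
    (List.nodup_finRange n) (List.mem_finRange j) hf

lemma wzbMulti_succ {f : FF n} (hf : Sm f) (m : Fin n → ℕ) (j : Fin n) :
    wzbMulti n (Function.update m j (m j + 1)) f = _root_.wzb n j (wzbMulti n m f) := by
  rw [wzbMulti_eq, wzbMulti_eq]
  exact fold_update_succ hS_wzb (fun a b g hg => wzb_wzb_fun hg a b)
    (List.nodup_finRange n) (List.mem_finRange j) hf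

lemma wzb_wzMulti {f : FF n} (hf : Sm f) (m : Fin n → ℕ) (j : Fin n) :
    _root_.wzb n j (wzMulti n m f) = wzMulti n m (_root_.wzb n j f) := by
  rw [wzMulti_eq, wzMulti_eq]
  exact fold_comm hS_wz (_root_.wzb n j)
    (fun k g hg => funext fun z => (wz_wzb_comm hg k j z).symm) hf m _

lemma wz_wzMulti {f : FF n} (hf : Sm f) (m : Fin n → ℕ) (j : Fin n) :
    _root_.wz n j (wzMulti n m f) = wzMulti n m (_root_.wz n j f) := by
  rw [wzMulti_eq, wzMulti_eq]
  exact fold_comm hS_wz (_root_.wz n j)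
    (fun k g hg => wz_wz_fun hg j k) hf m _

lemma wzb_wzbMulti {f : FF n} (hf : Sm f) (m : Fin n → ℕ) (j : Fin n) :
    _root_.wzb n j (wzbMulti n m f) = wzbMulti n m (_root_.wzb n j f) := by
  rw [wzbMulti_eq, wzbMulti_eq]
  exact fold_comm hS_wzb (_root_.wzb n j)
    (fun k g hg => wzb_wzb_fun hg j k) hf m _

lemma wzMulti_zero {m : Fin n → ℕ} (h : ∀ j, m j = 0) (f : FF n) : wzMulti n m f = f := by
  rw [wzMulti_eq]; exact fold_zero _ (fun j _ => h j) f

lemma wzbMulti_zero {m : Fin n → ℕ} (h : ∀ j, m j = 0) (f : FF n) : wzbMulti n m f = f := by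
  rw [wzbMulti_eq]; exact fold_zero _ (fun j _ => h j) f

-- ### operator level
lemma Dop_fun (j : Fin n) (f : FF n) :
    Dop n j f = fun w => 2 * _root_.wzb n j f w + w j * f w := rfl

lemma Dstar_fun (j : Fin n) (f : FF n) :
    Dstar n j f = fun w => -2 * _root_.wz n j f w + (starRingEnd ℂ) (w j) * f w := rfl

def Cw (j : Fin n) (f : FF n) : FF n :=
  fun w => (1/2:ℂ) * (w j * f w) - _root_.wzb n j f w

lemma Cw_fun (j : Fin n) (f : FF n) :
    Cw j f = fun w => (1/2:ℂ) * (w j * f w) - _root_.wzb n j f w := rfl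

lemma Sm.dop {f : FF n} (hf : Sm f) (j : Fin n) : Sm (Dop n j f) := by
  rw [Dop_fun]
  exact Sm.add (Sm.cmul (hf.wzbS j) 2) (Sm.mul (sm_coord j) hf)

lemma Sm.dstar {f : FF n} (hf : Sm f) (j : Fin n) : Sm (Dstar n j f) := by
  rw [Dstar_fun]
  exact Sm.add (Sm.cmul (hf.wzS j) (-2)) (Sm.mul (sm_conj_coord j) hf)

lemma Sm.cw {f : FF n} (hf : Sm f) (j : Fin n) : Sm (Cw j f) := by
  rw [Cw_fun]
  exact Sm.sub (Sm.cmul (Sm.mul (sm_coord j) hf) _) (hf.wzbS j)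

variable {f g h : FF n} {z : Fin n → ℂ}

lemma Dop_add (hg : DifferentiableAt ℝ g z) (hh : DifferentiableAt ℝ h z) (j : Fin n) :
    Dop n j (fun w => g w + h w) z = Dop n j g z + Dop n j h z := by
  simp only [Dop_fun, wzb_add hg hh]; ring

lemma Dstar_add (hg : DifferentiableAt ℝ g z) (hh : DifferentiableAt ℝ h z) (j : Fin n) :
    Dstar n j (fun w => g w + h w) z = Dstar n j g z + Dstar n j h z := by
  simp only [Dstar_fun, wz_add hg hh]; ring

lemma Cw_add (hg : DifferentiableAt ℝ g z) (hh : DifferentiableAt ℝ h z) (j : Fin n) :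
    Cw j (fun w => g w + h w) z = Cw j g z + Cw j h z := by
  simp only [Cw_fun, wzb_add hg hh]; ring

lemma Dop_cmul (hg : DifferentiableAt ℝ g z) (c : ℂ) (j : Fin n) :
    Dop n j (fun w => c * g w) z = c * Dop n j g z := by
  simp only [Dop_fun, wzb_cmul hg]; ring

lemma Dstar_cmul (hg : DifferentiableAt ℝ g z) (c : ℂ) (j : Fin n) :
    Dstar n j (fun w => c * g w) z = c * Dstar n j g z := by
  simp only [Dstar_fun, wz_cmul hg]; ring

lemma Cw_cmul (hg : DifferentiableAt ℝ g z) (c : ℂ) (j : Fin n) :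
    Cw j (fun w => c * g w) z = c * Cw j g z := by
  simp only [Cw_fun, wzb_cmul hg]; ring

lemma Dstar_sum {ι : Type*} {s : Finset ι} {g : ι → FF n}
    (hd : ∀ i ∈ s, DifferentiableAt ℝ (g i) z) (j : Fin n) :
    Dstar n j (fun w => ∑ i ∈ s, g i w) z = ∑ i ∈ s, Dstar n j (g i) z := by
  simp only [Dstar_fun, wz_sum hd]
  rw [Finset.mul_sum, Finset.mul_sum, ← Finset.sum_add_distrib]

lemma Cw_sum {ι : Type*} {s : Finset ι} {g : ι → FF n}
    (hd : ∀ i ∈ s, DifferentiableAt ℝ (g i) z) (j : Fin n) :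
    Cw j (fun w => ∑ i ∈ s, g i w) z = ∑ i ∈ s, Cw j (g i) z := by
  simp only [Cw_fun, wzb_sum hd]
  rw [Finset.mul_sum, Finset.mul_sum, ← Finset.sum_sub_distrib]
  try (congr 1; funext i; ring)

-- coordinate product rules
lemma wz_coordmul (hf : DifferentiableAt ℝ f z) (j k : Fin n) :
    _root_.wz n j (fun w => w k * f w) z
      = (if k = j then (1:ℂ) else 0) * f z + z k * _root_.wz n j f z := by
  rw [wz_mul ((sm_coord k).dAt z) hf, wz_coord]; ring

lemma wzb_coordmul (hf : DifferentiableAt ℝ f z) (j k : Fin n) :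
    _root_.wzb n j (fun w => w k * f w) z = z k * _root_.wzb n j f z := by
  rw [wzb_mul ((sm_coord k).dAt z) hf, wzb_coord]; ring

lemma wz_conjcoordmul (hf : DifferentiableAt ℝ f z) (j k : Fin n) :
    _root_.wz n j (fun w => (starRingEnd ℂ) (w k) * f w) z
      = (starRingEnd ℂ) (z k) * _root_.wz n j f z := by
  rw [wz_mul ((sm_conj_coord k).dAt z) hf, wz_conj_coord]; ring

lemma wzb_conjcoordmul (hf : DifferentiableAt ℝ f z) (j k : Fin n) :
    _root_.wzb n j (fun w => (starRingEnd ℂ) (w k) * f w) z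
      = (if k = j then (1:ℂ) else 0) * f z + (starRingEnd ℂ) (z k) * _root_.wzb n j f z := by
  rw [wzb_mul ((sm_conj_coord k).dAt z) hf, wzb_conj_coord]; ring

-- commutators
lemma c2 (hf : Sm f) (k j : Fin n) (z : Fin n → ℂ) :
    Dstar n k (Dstar n j f) z = Dstar n j (Dstar n k f) z := by
  have hwj : DifferentiableAt ℝ (_root_.wz n j f) z := ((hf.wzS j).dAt z)
  have hwk : DifferentiableAt ℝ (_root_.wz n k f) z := ((hf.wzS k).dAt z)
  have hcj : DifferentiableAt ℝ (fun w => (starRingEnd ℂ) (w j) * f w) z :=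
    ((sm_conj_coord j).dAt z).mul (hf.dAt z)
  have hck : DifferentiableAt ℝ (fun w => (starRingEnd ℂ) (w k) * f w) z :=
    ((sm_conj_coord k).dAt z).mul (hf.dAt z)
  simp only [Dstar_fun]
  rw [wz_add (hwj.const_mul _) hcj, wz_add (hwk.const_mul _) hck,
      wz_cmul hwj, wz_cmul hwk, wz_conjcoordmul (hf.dAt z), wz_conjcoordmul (hf.dAt z),
      wz_wz_comm' hf k j z]
  try ring

lemma c3 (hf : Sm f) (k j : Fin n) (z : Fin n → ℂ) :
    Dop n k (Dop n j f) z = Dop n j (Dop n k f) z := by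
  have hwj : DifferentiableAt ℝ (_root_.wzb n j f) z := ((hf.wzbS j).dAt z)
  have hwk : DifferentiableAt ℝ (_root_.wzb n k f) z := ((hf.wzbS k).dAt z)
  have hcj : DifferentiableAt ℝ (fun w => w j * f w) z := ((sm_coord j).dAt z).mul (hf.dAt z)
  have hck : DifferentiableAt ℝ (fun w => w k * f w) z := ((sm_coord k).dAt z).mul (hf.dAt z)
  simp only [Dop_fun]
  rw [wzb_add (hwj.const_mul _) hcj, wzb_add (hwk.const_mul _) hck,
      wzb_cmul hwj, wzb_cmul hwk, wzb_coordmul (hf.dAt z), wzb_coordmul (hf.dAt z),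
      wzb_wzb_comm hf k j z]
  try ring

lemma c1 (hf : Sm f) (k j : Fin n) (z : Fin n → ℂ) :
    Dop n k (Dstar n j f) z
      = Dstar n j (Dop n k f) z + 4 * (if k = j then (1:ℂ) else 0) * f z := by
  have hwj : DifferentiableAt ℝ (_root_.wz n j f) z := ((hf.wzS j).dAt z)
  have hwk : DifferentiableAt ℝ (_root_.wzb n k f) z := ((hf.wzbS k).dAt z)
  have hcj : DifferentiableAt ℝ (fun w => (starRingEnd ℂ) (w j) * f w) z :=
    ((sm_conj_coord j).dAt z).mul (hf.dAt z)
  have hck : DifferentiableAt ℝ (fun w => w k * f w) z := ((sm_coord k).dAt z).mul (hf.dAt z)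
  simp only [Dop_fun, Dstar_fun]
  rw [wzb_add (hwj.const_mul _) hcj, wz_add (hwk.const_mul _) hck,
      wzb_cmul hwj, wz_cmul hwk, wzb_conjcoordmul (hf.dAt z), wz_coordmul (hf.dAt z),
      ← wz_wzb_comm hf j k z]
  have hsw : (if j = k then (1:ℂ) else 0) = (if k = j then (1:ℂ) else 0) := by
    simp [eq_comm]
  rw [hsw]
  ring

lemma c4a (hf : Sm f) (k j : Fin n) (z : Fin n → ℂ) :
    Dop n k (Cw j f) z = Cw j (Dop n k f) z := by
  have hwj : DifferentiableAt ℝ (_root_.wzb n j f) z := ((hf.wzbS j).dAt z)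
  have hwk : DifferentiableAt ℝ (_root_.wzb n k f) z := ((hf.wzbS k).dAt z)
  have hcj : DifferentiableAt ℝ (fun w => w j * f w) z := ((sm_coord j).dAt z).mul (hf.dAt z)
  have hck : DifferentiableAt ℝ (fun w => w k * f w) z := ((sm_coord k).dAt z).mul (hf.dAt z)
  have hsub1 : DifferentiableAt ℝ (fun w => (1/2:ℂ) * (w j * f w)) z := hcj.const_mul _
  simp only [Cw_fun, Dop_fun]
  have e1 : _root_.wzb n k (fun w => (1/2:ℂ) * (w j * f w) - _root_.wzb n j f w) z
      = (1/2:ℂ) * (z j * _root_.wzb n k f z) - _root_.wzb n k (_root_.wzb n j f) z := by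
    rw [wzb_sub hsub1 hwj, wzb_cmul hcj, wzb_coordmul (hf.dAt z)]
    try ring
  rw [e1]
  have e2 : _root_.wzb n j (fun w => 2 * _root_.wzb n k f w + w k * f w) z
      = 2 * _root_.wzb n j (_root_.wzb n k f) z + z k * _root_.wzb n j f z := by
    rw [wzb_add (hwk.const_mul _) hck, wzb_cmul hwk, wzb_coordmul (hf.dAt z)]
  rw [e2, wzb_wzb_comm hf k j z]
  ring

lemma c4b (hf : Sm f) (k j : Fin n) (z : Fin n → ℂ) :
    Dstar n k (Cw j f) z = Cw j (Dstar n k f) z := by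
  have hwj : DifferentiableAt ℝ (_root_.wzb n j f) z := ((hf.wzbS j).dAt z)
  have hwk : DifferentiableAt ℝ (_root_.wz n k f) z := ((hf.wzS k).dAt z)
  have hcj : DifferentiableAt ℝ (fun w => w j * f w) z := ((sm_coord j).dAt z).mul (hf.dAt z)
  have hck : DifferentiableAt ℝ (fun w => (starRingEnd ℂ) (w k) * f w) z :=
    ((sm_conj_coord k).dAt z).mul (hf.dAt z)
  have hsub1 : DifferentiableAt ℝ (fun w => (1/2:ℂ) * (w j * f w)) z := hcj.const_mul _
  simp only [Cw_fun, Dstar_fun]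
  have e1 : _root_.wz n k (fun w => (1/2:ℂ) * (w j * f w) - _root_.wzb n j f w) z
      = (1/2:ℂ) * ((if j = k then (1:ℂ) else 0) * f z + z j * _root_.wz n k f z)
        - _root_.wz n k (_root_.wzb n j f) z := by
    rw [wz_sub hsub1 hwj, wz_cmul hcj, wz_coordmul (hf.dAt z)]
    try ring
  rw [e1]
  have e2 : _root_.wzb n j (fun w => -2 * _root_.wz n k f w + (starRingEnd ℂ) (w k) * f w) z
      = -2 * _root_.wzb n j (_root_.wz n k f) z
        + ((if k = j then (1:ℂ) else 0) * f z + (starRingEnd ℂ) (z k) * _root_.wzb n j f z) := by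
    rw [wzb_add (hwk.const_mul _) hck, wzb_cmul hwk, wzb_conjcoordmul (hf.dAt z)]
  rw [e2, wz_wzb_comm hf k j z]
  have hsw : (if j = k then (1:ℂ) else 0) = (if k = j then (1:ℂ) else 0) := by
    simp [eq_comm]
  rw [hsw]
  ring

-- ### L in D form
lemma Aop_pt (j : Fin n) (g : FF n) (w : Fin n → ℂ) :
    Aop n j g w = (1/2:ℂ) * Dop n j g w + (-(1/2):ℂ) * Dstar n j g w := by
  show pdx n j g w + Complex.I * ((w j).im : ℂ) * g w = _
  simp only [Dop_fun, Dstar_fun]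
  rw [show pdx n j g w = Pd j 1 g w from rfl, wz_eq, wzb_eq, conj_eq' (w j)]
  linear_combination (-(1/2:ℂ) * g w) * coord_eq' (w j)

lemma Bop_pt (j : Fin n) (g : FF n) (w : Fin n → ℂ) :
    Bop n j g w = (-(Complex.I)/2) * Dop n j g w + (-(Complex.I)/2) * Dstar n j g w := by
  show pdy n j g w - Complex.I * ((w j).re : ℂ) * g w = _
  simp only [Dop_fun, Dstar_fun]
  rw [show pdy n j g w = Pd j Complex.I g w from rfl, wz_eq, wzb_eq, conj_eq' (w j)]
  linear_combination ((Complex.I/2) * g w) * coord_eq' (w j)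
    + (Pd j Complex.I g w) * Complex.I_sq

lemma Aop_fun (j : Fin n) (g : FF n) :
    Aop n j g = fun w => (1/2:ℂ) * Dop n j g w + (-(1/2):ℂ) * Dstar n j g w :=
  funext fun w => Aop_pt j g w

lemma Bop_fun (j : Fin n) (g : FF n) :
    Bop n j g = fun w => (-(Complex.I)/2) * Dop n j g w + (-(Complex.I)/2) * Dstar n j g w :=
  funext fun w => Bop_pt j g w

lemma AABB {f : FF n} (hf : Sm f) (j : Fin n) (z : Fin n → ℂ) :
    Aop n j (Aop n j f) z + Bop n j (Bop n j f) z
      = -(1/2:ℂ) * (Dop n j (Dstar n j f) z + Dstar n j (Dop n j f) z) := by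
  have hdD : DifferentiableAt ℝ (Dop n j f) z := (hf.dop j).dAt z
  have hdDs : DifferentiableAt ℝ (Dstar n j f) z := (hf.dstar j).dAt z
  have h1 : DifferentiableAt ℝ (fun w => (1/2:ℂ) * Dop n j f w) z := hdD.const_mul _
  have h2 : DifferentiableAt ℝ (fun w => (-(1/2):ℂ) * Dstar n j f w) z := hdDs.const_mul _
  have h3 : DifferentiableAt ℝ (fun w => (-(Complex.I)/2) * Dop n j f w) z := hdD.const_mul _
  have h4 : DifferentiableAt ℝ (fun w => (-(Complex.I)/2) * Dstar n j f w) z := hdDs.const_mul _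
  rw [Aop_pt j (Aop n j f) z, Bop_pt j (Bop n j f) z, Aop_fun j f, Bop_fun j f]
  rw [Dop_add h1 h2, Dstar_add h1 h2, Dop_add h3 h4, Dstar_add h3 h4]
  simp only [Dop_cmul hdD, Dop_cmul hdDs, Dstar_cmul hdD, Dstar_cmul hdDs]
  linear_combination ((1/4:ℂ) * (Dop n j (Dop n j f) z + Dstar n j (Dstar n j f) z + Dop n j (Dstar n j f) z + Dstar n j (Dop n j f) z)) * Complex.I_sq

lemma L_form {f : FF n} (hf : Sm f) (z : Fin n → ℂ) :
    twistedL n f z = (1/4:ℂ) * ∑ j : Fin n, (Dop n j (Dstar n j f) z + Dstar n j (Dop n j f) z) := by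
  show (-(1/2) : ℂ) * ∑ j : Fin n, (Aop n j (Aop n j f) z + Bop n j (Bop n j f) z) = _
  rw [Finset.sum_congr rfl (fun j _ => AABB hf j z)]
  rw [← Finset.mul_sum Finset.univ
    (fun j => Dop n j (Dstar n j f) z + Dstar n j (Dop n j f) z) (-(1/2:ℂ))]
  ring

-- ### commutation of L with ladder operators
lemma twistedL_cmul {f : FF n} (hf : Sm f) (c : ℂ) (z : Fin n → ℂ) :
    twistedL n (fun w => c * f w) z = c * twistedL n f z := by
  rw [L_form (hf.cmul c) z, L_form hf z]
  have e : ∀ j : Fin n, Dop n j (Dstar n j (fun w => c * f w)) z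
      + Dstar n j (Dop n j (fun w => c * f w)) z
      = c * (Dop n j (Dstar n j f) z + Dstar n j (Dop n j f) z) := by
    intro j
    have e1 : Dstar n j (fun w => c * f w) = fun w => c * Dstar n j f w :=
      funext fun w => Dstar_cmul (hf.dAt w) c j
    have e2 : Dop n j (fun w => c * f w) = fun w => c * Dop n j f w :=
      funext fun w => Dop_cmul (hf.dAt w) c j
    rw [e1, e2, Dop_cmul ((hf.dstar j).dAt z), Dstar_cmul ((hf.dop j).dAt z)]
    ring
  rw [Finset.sum_congr rfl (fun j _ => e j), ← Finset.mul_sum]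
  ring

lemma Lcomm_Dstar {f : FF n} (hf : Sm f) (j : Fin n) (z : Fin n → ℂ) :
    twistedL n (Dstar n j f) z = Dstar n j (twistedL n f) z + 2 * Dstar n j f z := by
  rw [L_form (hf.dstar j) z]
  have e : ∀ k : Fin n, Dop n k (Dstar n k (Dstar n j f)) z + Dstar n k (Dop n k (Dstar n j f)) z
      = Dstar n j (fun w => Dop n k (Dstar n k f) w + Dstar n k (Dop n k f) w) z
        + 8 * (if k = j then (1:ℂ) else 0) * Dstar n k f z := by
    intro k
    have t1 : Dstar n k (Dstar n j f) = Dstar n j (Dstar n k f) :=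
      funext fun w => c2 hf k j w
    have t2 : Dop n k (Dstar n j (Dstar n k f)) z
        = Dstar n j (Dop n k (Dstar n k f)) z
          + 4 * (if k = j then (1:ℂ) else 0) * Dstar n k f z :=
      c1 (hf.dstar k) k j z
    have t3 : Dop n k (Dstar n j f)
        = fun w => Dstar n j (Dop n k f) w + (4 * (if k = j then (1:ℂ) else 0)) * f w := by
      funext w
      rw [c1 hf k j w]; try ring
    have hd1 : DifferentiableAt ℝ (Dstar n j (Dop n k f)) z := ((hf.dop k).dstar j).dAt z
    have t4 : Dstar n k (fun w => Dstar n j (Dop n k f) w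
          + (4 * (if k = j then (1:ℂ) else 0)) * f w) z
        = Dstar n k (Dstar n j (Dop n k f)) z
          + (4 * (if k = j then (1:ℂ) else 0)) * Dstar n k f z := by
      rw [Dstar_add hd1 ((hf.dAt z).const_mul _) k, Dstar_cmul (hf.dAt z)]
    have t5 : Dstar n k (Dstar n j (Dop n k f)) z = Dstar n j (Dstar n k (Dop n k f)) z :=
      c2 (hf.dop k) k j z
    have t6 : Dstar n j (fun w => Dop n k (Dstar n k f) w + Dstar n k (Dop n k f) w) z
        = Dstar n j (Dop n k (Dstar n k f)) z + Dstar n j (Dstar n k (Dop n k f)) z :=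
      Dstar_add (((hf.dstar k).dop k).dAt z) (((hf.dop k).dstar k).dAt z) j
    rw [t1, t2, t3, t4, t5, t6]
    ring
  rw [Finset.sum_congr rfl (fun k _ => e k), Finset.sum_add_distrib]
  have hsum1 : ∑ k : Fin n,
      Dstar n j (fun w => Dop n k (Dstar n k f) w + Dstar n k (Dop n k f) w) z
      = Dstar n j (fun w => ∑ k : Fin n, (Dop n k (Dstar n k f) w + Dstar n k (Dop n k f) w)) z := by
    rw [Dstar_sum (fun k _ => (((hf.dstar k).dop k).dAt z).fun_add (((hf.dop k).dstar k).dAt z)) j]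
  have hsum2 : ∑ k : Fin n, 8 * (if k = j then (1:ℂ) else 0) * Dstar n k f z
      = 8 * Dstar n j f z := by
    rw [Finset.sum_congr rfl (fun k _ => show 8 * (if k = j then (1:ℂ) else 0) * Dstar n k f z
      = if k = j then 8 * Dstar n k f z else 0 by split <;> ring)]
    rw [Finset.sum_ite_eq' Finset.univ j (fun k => 8 * Dstar n k f z)]
    simp
  rw [hsum1, hsum2]
  have hLf : twistedL n f = fun w =>
      (1/4:ℂ) * ∑ k : Fin n, (Dop n k (Dstar n k f) w + Dstar n k (Dop n k f) w) :=
    funext fun w => L_form hf w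
  rw [hLf]
  have hdsum : DifferentiableAt ℝ
      (fun w => ∑ k : Fin n, (Dop n k (Dstar n k f) w + Dstar n k (Dop n k f) w)) z := by
    apply DifferentiableAt.fun_sum
    intro k _
    exact (((hf.dstar k).dop k).dAt z).add (((hf.dop k).dstar k).dAt z)
  rw [Dstar_cmul hdsum]
  ring

lemma Lcomm_Cw {f : FF n} (hf : Sm f) (j : Fin n) (z : Fin n → ℂ) :
    twistedL n (Cw j f) z = Cw j (twistedL n f) z := by
  rw [L_form (hf.cw j) z]
  have e : ∀ k : Fin n, Dop n k (Dstar n k (Cw j f)) z + Dstar n k (Dop n k (Cw j f)) z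
      = Cw j (fun w => Dop n k (Dstar n k f) w + Dstar n k (Dop n k f) w) z := by
    intro k
    have t1 : Dstar n k (Cw j f) = Cw j (Dstar n k f) := funext fun w => c4b hf k j w
    have t2 : Dop n k (Cw j (Dstar n k f)) z = Cw j (Dop n k (Dstar n k f)) z :=
      c4a (hf.dstar k) k j z
    have t3 : Dop n k (Cw j f) = Cw j (Dop n k f) := funext fun w => c4a hf k j w
    have t4 : Dstar n k (Cw j (Dop n k f)) z = Cw j (Dstar n k (Dop n k f)) z :=
      c4b (hf.dop k) k j z
    have t5 : Cw j (fun w => Dop n k (Dstar n k f) w + Dstar n k (Dop n k f) w) z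
        = Cw j (Dop n k (Dstar n k f)) z + Cw j (Dstar n k (Dop n k f)) z :=
      Cw_add (((hf.dstar k).dop k).dAt z) (((hf.dop k).dstar k).dAt z) j
    rw [t1, t2, t3, t4, t5]
  rw [Finset.sum_congr rfl (fun k _ => e k)]
  have hsum1 : ∑ k : Fin n,
      Cw j (fun w => Dop n k (Dstar n k f) w + Dstar n k (Dop n k f) w) z
      = Cw j (fun w => ∑ k : Fin n, (Dop n k (Dstar n k f) w + Dstar n k (Dop n k f) w)) z := by
    rw [Cw_sum (fun k _ => (((hf.dstar k).dop k).dAt z).fun_add (((hf.dop k).dstar k).dAt z)) j]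
  rw [hsum1]
  have hLf : twistedL n f = fun w =>
      (1/4:ℂ) * ∑ k : Fin n, (Dop n k (Dstar n k f) w + Dstar n k (Dop n k f) w) :=
    funext fun w => L_form hf w
  rw [hLf]
  have hdsum : DifferentiableAt ℝ
      (fun w => ∑ k : Fin n, (Dop n k (Dstar n k f) w + Dstar n k (Dop n k f) w)) z := by
    apply DifferentiableAt.fun_sum
    intro k _
    exact (((hf.dstar k).dop k).dAt z).add (((hf.dop k).dstar k).dAt z)
  rw [Cw_cmul hdsum]

-- ### fab structure
def Ee : FF n := fun w => Complex.exp ((1/2:ℂ) * (normSq2 n w : ℂ))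

lemma sm_Ee : Sm (Ee (n := n)) := sm_exp_cq (1/2)

lemma wz_Ee (j : Fin n) (z : Fin n → ℂ) :
    _root_.wz n j Ee z = (1/2:ℂ) * (starRingEnd ℂ) (z j) * Ee z := wz_exp_cq (1/2) j z

lemma wzb_Ee (j : Fin n) (z : Fin n → ℂ) :
    _root_.wzb n j Ee z = (1/2:ℂ) * (z j) * Ee z := wzb_exp_cq (1/2) j z

lemma gauss_fun : gauss n = fun w => Complex.exp ((-1:ℂ) * (normSq2 n w : ℂ)) := by
  funext w; show Complex.exp (-((normSq2 n w : ℝ):ℂ)) = _; rw [neg_one_mul]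

lemma sm_gauss : Sm (gauss n) := by rw [gauss_fun]; exact sm_exp_cq (-1)

lemma fab_pt (α β : Fin n → ℕ) (w : Fin n → ℂ) :
    fab n α β w = (-1:ℂ)^((∑ j, α j) + (∑ j, β j)) * Ee w
      * wzMulti n α (wzbMulti n β (gauss n)) w := by
  show (-1:ℂ)^_ * Complex.exp ((normSq2 n w : ℂ)/2) * _ = _
  rw [show ((normSq2 n w : ℂ))/2 = (1/2:ℂ)*(normSq2 n w:ℂ) by ring]
  rfl

lemma fab_eq (α β : Fin n → ℕ) :
    fab n α β = fun w => (-1:ℂ)^((∑ j, α j) + (∑ j, β j)) * Ee w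
      * wzMulti n α (wzbMulti n β (gauss n)) w :=
  funext fun w => fab_pt α β w

lemma sm_fab (α β : Fin n → ℕ) : Sm (fab n α β) := by
  rw [fab_eq]
  exact Sm.mul (Sm.cmul sm_Ee _) (sm_wzMulti (sm_wzbMulti sm_gauss β) α)

lemma sum_update_succ (m : Fin n → ℕ) (j : Fin n) :
    ∑ i, Function.update m j (m j + 1) i = (∑ i, m i) + 1 := by
  rw [Finset.sum_update_of_mem (Finset.mem_univ j),
      ← Finset.add_sum_erase _ m (Finset.mem_univ j), Finset.sdiff_singleton_eq_erase]
  ring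

-- ### ladder identities
lemma R1 (α β : Fin n → ℕ) (j : Fin n) (z : Fin n → ℂ) :
    fab n (Function.update α j (α j + 1)) β z = (1/2:ℂ) * Dstar n j (fab n α β) z := by
  have hGβ : Sm (wzbMulti n β (gauss n)) := sm_wzbMulti sm_gauss β
  have hG : Sm (wzMulti n α (wzbMulti n β (gauss n))) := sm_wzMulti hGβ α
  have hmulti : wzMulti n (Function.update α j (α j + 1)) (wzbMulti n β (gauss n))
      = _root_.wz n j (wzMulti n α (wzbMulti n β (gauss n))) := wzMulti_succ hGβ α j
  rw [fab_pt, hmulti, sum_update_succ α j, fab_eq α β]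
  simp only [Dstar_fun]
  have hc : DifferentiableAt ℝ
      (fun w => (-1:ℂ)^((∑ i, α i) + (∑ i, β i)) * Ee w) z := (sm_Ee.cmul _).dAt z
  rw [wz_mul hc (hG.dAt z) j, wz_cmul (sm_Ee.dAt z), wz_Ee]
  rw [show (∑ i, α i) + 1 + (∑ i, β i) = ((∑ i, α i) + (∑ i, β i)) + 1 by omega, pow_succ]
  ring

lemma R2 (α β : Fin n → ℕ) (j : Fin n) (z : Fin n → ℂ) :
    fab n α (Function.update β j (β j + 1)) z = Cw j (fab n α β) z := by
  have hGβ : Sm (wzbMulti n β (gauss n)) := sm_wzbMulti sm_gauss β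
  have hG : Sm (wzMulti n α (wzbMulti n β (gauss n))) := sm_wzMulti hGβ α
  have hmulti : wzMulti n α (wzbMulti n (Function.update β j (β j + 1)) (gauss n))
      = _root_.wzb n j (wzMulti n α (wzbMulti n β (gauss n))) := by
    rw [wzbMulti_succ sm_gauss β j, ← wzb_wzMulti hGβ α j]
  rw [fab_pt, hmulti, sum_update_succ β j, fab_eq α β]
  simp only [Cw_fun]
  have hc : DifferentiableAt ℝ
      (fun w => (-1:ℂ)^((∑ i, α i) + (∑ i, β i)) * Ee w) z := (sm_Ee.cmul _).dAt z
  rw [wzb_mul hc (hG.dAt z) j, wzb_cmul (sm_Ee.dAt z), wzb_Ee]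
  rw [show (∑ i, α i) + ((∑ i, β i) + 1) = ((∑ i, α i) + (∑ i, β i)) + 1 by omega, pow_succ]
  ring

-- ### ground state
def F0 : FF n := fun w => Complex.exp ((-(1/2):ℂ) * (normSq2 n w : ℂ))

lemma sm_F0 : Sm (F0 (n := n)) := sm_exp_cq _

lemma wz_F0 (k : Fin n) (w : Fin n → ℂ) :
    _root_.wz n k F0 w = (-(1/2:ℂ)) * (starRingEnd ℂ) (w k) * F0 w := wz_exp_cq _ k w

lemma wzb_F0 (k : Fin n) (w : Fin n → ℂ) :
    _root_.wzb n k F0 w = (-(1/2:ℂ)) * (w k) * F0 w := wzb_exp_cq _ k w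

lemma fab_zero {α β : Fin n → ℕ} (hα : ∀ j, α j = 0) (hβ : ∀ j, β j = 0) :
    fab n α β = F0 (n := n) := by
  funext w
  rw [fab_pt, wzbMulti_zero hβ, wzMulti_zero hα]
  rw [Finset.sum_eq_zero (fun j _ => hα j), Finset.sum_eq_zero (fun j _ => hβ j)]
  show (-1:ℂ)^(0+0) * Complex.exp _ * Complex.exp (-((normSq2 n w : ℝ):ℂ)) = _
  rw [show ((0:ℕ)+0) = 0 from rfl, pow_zero, one_mul, ← Complex.exp_add]
  show Complex.exp _ = Complex.exp _
  congr 1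
  ring

lemma Dop_F0 (k : Fin n) : Dop n k (F0 (n := n)) = fun _ => (0:ℂ) := by
  funext w
  show 2 * _root_.wzb n k F0 w + w k * F0 w = 0
  rw [wzb_F0]
  ring

lemma Dstar_F0 (k : Fin n) :
    Dstar n k (F0 (n := n)) = fun w => 2 * ((starRingEnd ℂ) (w k) * F0 w) := by
  funext w
  show -2 * _root_.wz n k F0 w + (starRingEnd ℂ) (w k) * F0 w = _
  rw [wz_F0]
  ring

lemma base_eig (z : Fin n → ℂ) : twistedL n (F0 (n := n)) z = (n : ℂ) * F0 z := by
  rw [L_form sm_F0 z]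
  have e : ∀ k : Fin n, Dop n k (Dstar n k (F0 (n:=n))) z + Dstar n k (Dop n k (F0 (n:=n))) z
      = 4 * F0 z := by
    intro k
    have h1 : Dop n k (Dstar n k (F0 (n:=n))) z = 4 * F0 z := by
      rw [Dstar_F0 k]
      show 2 * _root_.wzb n k (fun w => 2 * ((starRingEnd ℂ) (w k) * F0 w)) z
        + z k * (2 * ((starRingEnd ℂ) (z k) * F0 z)) = _
      rw [wzb_cmul (((sm_conj_coord k).dAt z).fun_mul (sm_F0.dAt z)),
          wzb_conjcoordmul (sm_F0.dAt z), wzb_F0, if_pos rfl]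
      ring
    have h2 : Dstar n k (Dop n k (F0 (n:=n))) z = 0 := by
      rw [Dop_F0 k]
      show -2 * _root_.wz n k (fun _ => (0:ℂ)) z + (starRingEnd ℂ) (z k) * 0 = 0
      rw [wz_const]
      ring
    rw [h1, h2, add_zero]
  rw [Finset.sum_congr rfl (fun k _ => e k), Finset.sum_const, Finset.card_univ,
      Fintype.card_fin, nsmul_eq_mul]
  ring

-- ### main induction
lemma key (N : ℕ) : ∀ (α β : Fin n → ℕ), (∑ j, α j) + (∑ j, β j) = N →
    ∀ z : Fin n → ℂ, twistedL n (fab n α β) z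
      = ((n:ℂ) + 2 * ((∑ j, α j : ℕ) : ℂ)) * fab n α β z := by
  induction N with
  | zero =>
    intro α β hN z
    have hα : ∀ j, α j = 0 := by
      intro j
      have h1 : ∑ j, α j = 0 := by omega
      exact (Finset.sum_eq_zero_iff.mp h1) j (Finset.mem_univ j)
    have hβ : ∀ j, β j = 0 := by
      intro j
      have h1 : ∑ j, β j = 0 := by omega
      exact (Finset.sum_eq_zero_iff.mp h1) j (Finset.mem_univ j)
    rw [fab_zero hα hβ, base_eig, Finset.sum_eq_zero (fun j _ => hα j)]
    norm_num
  | succ N ih =>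
    intro α β hN z
    by_cases hA : (∑ j, α j) = 0
    · have hβpos : ∑ j, β j = N + 1 := by omega
      have hj : ∃ j, β j ≠ 0 := by
        by_contra hcon
        push_neg at hcon
        rw [Finset.sum_eq_zero (fun j _ => hcon j)] at hβpos
        omega
      obtain ⟨j, hj⟩ := hj
      set β' := Function.update β j (β j - 1) with hβ'def
      have hupd : Function.update β' j (β' j + 1) = β := by
        funext i
        by_cases hij : i = j
        · subst hij
          rw [Function.update_self, hβ'def, Function.update_self]
          omega
        · rw [Function.update_of_ne hij, hβ'def, Function.update_of_ne hij]
      have hsumβ : (∑ i, β i) = (∑ i, β' i) + 1 := by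
        rw [← hupd, sum_update_succ]
      have hsum' : (∑ i, α i) + (∑ i, β' i) = N := by omega
      have hfab : fab n α β = fun w => Cw j (fab n α β') w := by
        rw [← hupd]
        exact funext fun w => R2 α β' j w
      have hCw : (fun w => Cw j (fab n α β') w) = Cw j (fab n α β') := rfl
      rw [hfab, hCw, Lcomm_Cw (sm_fab α β') j z]
      have hLf : twistedL n (fab n α β') = fun w =>
          ((n:ℂ) + 2 * ((∑ i, α i : ℕ) : ℂ)) * fab n α β' w :=
        funext fun w => ih α β' hsum' w
      rw [hLf, Cw_cmul ((sm_fab α β').dAt z)]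
    · have hj : ∃ j, α j ≠ 0 := by
        by_contra hcon
        push_neg at hcon
        rw [Finset.sum_eq_zero (fun j _ => hcon j)] at hA
        omega
      obtain ⟨j, hj⟩ := hj
      set α' := Function.update α j (α j - 1) with hα'def
      have hupd : Function.update α' j (α' j + 1) = α := by
        funext i
        by_cases hij : i = j
        · subst hij
          rw [Function.update_self, hα'def, Function.update_self]
          omega
        · rw [Function.update_of_ne hij, hα'def, Function.update_of_ne hij]
      have hsumα : (∑ i, α i) = (∑ i, α' i) + 1 := by
        rw [← hupd, sum_update_succ]
      have hsum' : (∑ i, α' i) + (∑ i, β i) = N := by omega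
      have hfab : fab n α β = fun w => (1/2:ℂ) * Dstar n j (fab n α' β) w := by
        rw [← hupd]
        exact funext fun w => R1 α' β j w
      rw [hfab, twistedL_cmul ((sm_fab α' β).dstar j) (1/2) z,
          Lcomm_Dstar (sm_fab α' β) j z]
      have hLf : twistedL n (fab n α' β) = fun w =>
          ((n:ℂ) + 2 * ((∑ i, α' i : ℕ) : ℂ)) * fab n α' β w :=
        funext fun w => ih α' β hsum' w
      rw [hLf, Dstar_cmul ((sm_fab α' β).dAt z)]
      have hcast : ((∑ i, α i : ℕ) : ℂ) = ((∑ i, α' i : ℕ) : ℂ) + 1 := by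
        rw [hsumα]; push_cast; ring
      rw [hcast]
      ring

end TL9
end Aux

theorem stmt9 (n : ℕ) (α β : Fin n → ℕ) (z : Fin n → ℂ) :
    twistedL n (fab n α β) z = ((n : ℂ) + 2 * (∑ j, α j : ℕ)) * fab n α β z :=
  TL9.key ((∑ j, α j) + (∑ j, β j)) α β rfl z
end

section
/- For all multi-indices α, β ∈ ℕ^n, the squared L² norm over ℝ^{2n} of f_{α,β}(z) = (−1)^{|α|+|β|} e^{|z|²/2} ∂_z^α ∂_{z̄}^β e^{−|z|²} equals π^n · α! · β!. -/
open MeasureTheory Complex Real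

open Complex Finset Polynomial

noncomputable section


def wd1 (f : ℂ → ℂ) (w : ℂ) : ℂ := (1/2 : ℂ) * (fderiv ℝ f w 1 - Complex.I * fderiv ℝ f w Complex.I)
def wd1b (f : ℂ → ℂ) (w : ℂ) : ℂ := (1/2 : ℂ) * (fderiv ℝ f w 1 + Complex.I * fderiv ℝ f w Complex.I)

theorem wd1_mul {f g : ℂ → ℂ} {w : ℂ} (hf : DifferentiableAt ℝ f w) (hg : DifferentiableAt ℝ g w) :
    wd1 (fun x => f x * g x) w = wd1 f w * g w + f w * wd1 g w := by
  unfold wd1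
  rw [fderiv_fun_mul hf hg]
  simp only [ContinuousLinearMap.add_apply, ContinuousLinearMap.smul_apply, smul_eq_mul]
  ring

theorem wd1b_mul {f g : ℂ → ℂ} {w : ℂ} (hf : DifferentiableAt ℝ f w) (hg : DifferentiableAt ℝ g w) :
    wd1b (fun x => f x * g x) w = wd1b f w * g w + f w * wd1b g w := by
  unfold wd1b
  rw [fderiv_fun_mul hf hg]
  simp only [ContinuousLinearMap.add_apply, ContinuousLinearMap.smul_apply, smul_eq_mul]
  ring

theorem fderiv_holo {f : ℂ → ℂ} {w v : ℂ} (hf : DifferentiableAt ℂ f w) :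
    fderiv ℝ f w v = deriv f w * v := by
  rw [show fderiv ℝ f w = (fderiv ℂ f w).restrictScalars ℝ from
    (hf.hasFDerivAt.restrictScalars ℝ).fderiv]
  have : fderiv ℂ f w v = v • fderiv ℂ f w 1 := by
    rw [← ContinuousLinearMap.map_smul]; norm_num
  simpa [fderiv_apply_one_eq_deriv, mul_comm] using this

theorem wd1_holo {f : ℂ → ℂ} {w : ℂ} (hf : DifferentiableAt ℂ f w) :
    wd1 f w = deriv f w := by
  unfold wd1
  rw [fderiv_holo hf, fderiv_holo hf]
  ring_nf
  simp [Complex.I_sq]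
  ring

theorem wd1b_holo {f : ℂ → ℂ} {w : ℂ} (hf : DifferentiableAt ℂ f w) :
    wd1b f w = 0 := by
  unfold wd1b
  rw [fderiv_holo hf, fderiv_holo hf]
  ring_nf
  simp [Complex.I_sq]

theorem fderiv_conj_comp {g : ℂ → ℂ} {w v : ℂ} (hg : DifferentiableAt ℝ g w) :
    fderiv ℝ (fun x => starRingEnd ℂ (g x)) w v = starRingEnd ℂ (fderiv ℝ g w v) := by
  have h := (Complex.conjCLE.hasFDerivAt.comp w hg.hasFDerivAt).fderiv
  rw [show (fun x => starRingEnd ℂ (g x)) = (Complex.conjCLE : ℂ → ℂ) ∘ g from rfl, h]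
  rfl

theorem wd1_conj {g : ℂ → ℂ} {w : ℂ} (hg : DifferentiableAt ℂ g w) :
    wd1 (fun x => starRingEnd ℂ (g x)) w = 0 := by
  unfold wd1
  rw [fderiv_conj_comp (hg.restrictScalars ℝ), fderiv_conj_comp (hg.restrictScalars ℝ),
    fderiv_holo hg, fderiv_holo hg]
  simp only [map_mul, Complex.conj_I]
  ring_nf
  simp [Complex.I_sq]

theorem wd1b_conj {g : ℂ → ℂ} {w : ℂ} (hg : DifferentiableAt ℂ g w) :
    wd1b (fun x => starRingEnd ℂ (g x)) w = starRingEnd ℂ (deriv g w) := by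
  unfold wd1b
  rw [fderiv_conj_comp (hg.restrictScalars ℝ), fderiv_conj_comp (hg.restrictScalars ℝ),
    fderiv_holo hg, fderiv_holo hg]
  simp only [map_mul, Complex.conj_I]
  ring_nf
  simp [Complex.I_sq]
  ring

theorem wd1_exp {u : ℂ → ℂ} {w : ℂ} (hu : DifferentiableAt ℝ u w) :
    wd1 (fun x => Complex.exp (u x)) w = Complex.exp (u w) * wd1 u w := by
  unfold wd1
  have h : ∀ v, fderiv ℝ (fun x => Complex.exp (u x)) w v = Complex.exp (u w) * fderiv ℝ u w v := by
    intro v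
    have := (((Complex.hasDerivAt_exp (u w)).hasFDerivAt.restrictScalars ℝ).comp w hu.hasFDerivAt).fderiv
    rw [show (fun x => Complex.exp (u x)) = Complex.exp ∘ u from rfl, this]
    simp [ContinuousLinearMap.smulRight, mul_comm]
  rw [h, h]
  ring

theorem wd1b_exp {u : ℂ → ℂ} {w : ℂ} (hu : DifferentiableAt ℝ u w) :
    wd1b (fun x => Complex.exp (u x)) w = Complex.exp (u w) * wd1b u w := by
  unfold wd1b
  have h : ∀ v, fderiv ℝ (fun x => Complex.exp (u x)) w v = Complex.exp (u w) * fderiv ℝ u w v := by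
    intro v
    have := (((Complex.hasDerivAt_exp (u w)).hasFDerivAt.restrictScalars ℝ).comp w hu.hasFDerivAt).fderiv
    rw [show (fun x => Complex.exp (u x)) = Complex.exp ∘ u from rfl, this]
    simp [ContinuousLinearMap.smulRight, mul_comm]
  rw [h, h]
  ring

theorem wd1_sum {s : Finset ℕ} {f : ℕ → ℂ → ℂ} {w : ℂ}
    (hf : ∀ k ∈ s, DifferentiableAt ℝ (f k) w) :
    wd1 (fun x => ∑ k ∈ s, f k x) w = ∑ k ∈ s, wd1 (f k) w := by
  unfold wd1
  rw [fderiv_fun_sum hf]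
  simp only [ContinuousLinearMap.sum_apply, Finset.mul_sum, ← Finset.sum_sub_distrib]



def Efun : ℂ → ℂ := fun w => Complex.exp (-(w * starRingEnd ℂ w))

def coefc (a b k : ℕ) : ℂ := (-1 : ℂ)^k * (a.choose k) * (b.descFactorial k)

def gpoly (a b : ℕ) (w : ℂ) : ℂ :=
  ∑ k ∈ range (a+1), coefc a b k * w^(b-k) * (starRingEnd ℂ w)^(a-k)

def hfun (a b : ℕ) : ℂ → ℂ := fun w => (-1:ℂ)^(a+b) * gpoly a b w * Efun w

@[fun_prop]
theorem diff_conj : Differentiable ℝ (fun w : ℂ => starRingEnd ℂ w) :=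
  Complex.conjCLE.differentiable

@[fun_prop]
theorem diff_Efun : Differentiable ℝ Efun := by
  unfold Efun; fun_prop

@[fun_prop]
theorem diff_gpoly (a b : ℕ) : Differentiable ℝ (gpoly a b) := by
  unfold gpoly; fun_prop

@[fun_prop]
theorem diff_hfun (a b : ℕ) : Differentiable ℝ (hfun a b) := by
  unfold hfun; fun_prop

theorem wd1_conj_id {w : ℂ} : wd1 (fun x : ℂ => starRingEnd ℂ x) w = 0 :=
  wd1_conj differentiableAt_id

theorem wd1b_conj_id {w : ℂ} : wd1b (fun x : ℂ => starRingEnd ℂ x) w = 1 := by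
  rw [show (fun x : ℂ => starRingEnd ℂ x) = (fun x : ℂ => starRingEnd ℂ (id x)) from rfl,
    wd1b_conj differentiableAt_id]
  simp

theorem wd1_u (w : ℂ) : wd1 (fun w : ℂ => -(w * starRingEnd ℂ w)) w = -(starRingEnd ℂ w) := by
  have h : (fun w : ℂ => -(w * starRingEnd ℂ w)) = (fun w : ℂ => (-w) * starRingEnd ℂ w) := by
    funext x; ring
  rw [h, wd1_mul (by fun_prop) (by fun_prop),
    wd1_holo (by fun_prop : DifferentiableAt ℂ (fun w : ℂ => -w) w), wd1_conj_id]
  simp [deriv_neg]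

theorem wd1b_u (w : ℂ) : wd1b (fun w : ℂ => -(w * starRingEnd ℂ w)) w = -w := by
  have h : (fun w : ℂ => -(w * starRingEnd ℂ w)) = (fun w : ℂ => (-w) * starRingEnd ℂ w) := by
    funext x; ring
  rw [h, wd1b_mul (by fun_prop) (by fun_prop),
    wd1b_holo (by fun_prop : DifferentiableAt ℂ (fun w : ℂ => -w) w), wd1b_conj_id]
  ring

theorem wd1_Efun (w : ℂ) : wd1 Efun w = -starRingEnd ℂ w * Efun w := by
  unfold Efun
  rw [wd1_exp (by fun_prop : DifferentiableAt ℝ (fun w : ℂ => -(w * starRingEnd ℂ w)) w), wd1_u]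
  ring

theorem wd1b_Efun (w : ℂ) : wd1b Efun w = -w * Efun w := by
  unfold Efun
  rw [wd1b_exp (by fun_prop : DifferentiableAt ℝ (fun w : ℂ => -(w * starRingEnd ℂ w)) w), wd1b_u]
  ring

theorem wd1_mono (c : ℂ) (m n : ℕ) (w : ℂ) :
    wd1 (fun x : ℂ => c * x^m * (starRingEnd ℂ x)^n) w
      = c * (m : ℂ) * w^(m-1) * (starRingEnd ℂ w)^n := by
  have h : (fun x : ℂ => c * x^m * (starRingEnd ℂ x)^n)
      = (fun x : ℂ => (c * x^m) * starRingEnd ℂ (x^n)) := by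
    funext x; rw [map_pow]
  rw [h, wd1_mul (by fun_prop) (by fun_prop : DifferentiableAt ℝ (fun x : ℂ => starRingEnd ℂ (x^n)) w),
    wd1_holo (by fun_prop : DifferentiableAt ℂ (fun x : ℂ => c * x^m) w),
    wd1_conj (by fun_prop : DifferentiableAt ℂ (fun x : ℂ => x^n) w)]
  rw [deriv_const_mul _ (by fun_prop : DifferentiableAt ℂ (fun x : ℂ => x^m) w), deriv_pow_field]
  rw [map_pow]
  ring

theorem wd1b_mono (c : ℂ) (m n : ℕ) (w : ℂ) :
    wd1b (fun x : ℂ => c * x^m * (starRingEnd ℂ x)^n) w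
      = c * (n : ℂ) * w^m * (starRingEnd ℂ w)^(n-1) := by
  have h : (fun x : ℂ => c * x^m * (starRingEnd ℂ x)^n)
      = (fun x : ℂ => (c * x^m) * starRingEnd ℂ (x^n)) := by
    funext x; rw [map_pow]
  rw [h, wd1b_mul (by fun_prop) (by fun_prop : DifferentiableAt ℝ (fun x : ℂ => starRingEnd ℂ (x^n)) w),
    wd1b_holo (by fun_prop : DifferentiableAt ℂ (fun x : ℂ => c * x^m) w),
    wd1b_conj (by fun_prop : DifferentiableAt ℂ (fun x : ℂ => x^n) w)]
  rw [deriv_pow_field, map_mul, map_natCast, map_pow, map_pow]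
  ring

theorem gpoly_zero (b : ℕ) (w : ℂ) : gpoly 0 b w = w^b := by
  unfold gpoly coefc
  simp

theorem hfun_zero_zero : hfun 0 0 = Efun := by
  funext w
  unfold hfun
  rw [gpoly_zero]
  simp

theorem wd1b_hfun_zero (b : ℕ) : wd1b (hfun 0 b) = hfun 0 (b+1) := by
  funext w
  have h : hfun 0 b = (fun x : ℂ => ((-1:ℂ)^b * x^b * (starRingEnd ℂ x)^0) * Efun x) := by
    funext x; unfold hfun; rw [gpoly_zero]; ring_nf
  rw [h, wd1b_mul (by fun_prop) (by fun_prop), wd1b_mono, wd1b_Efun]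
  unfold hfun
  rw [gpoly_zero]
  push_cast
  ring

theorem coefc_zero (a b : ℕ) : coefc a b 0 = 1 := by unfold coefc; simp

theorem coefc_top (a b : ℕ) : coefc a b (a+1) = 0 := by
  unfold coefc; simp [Nat.choose_succ_self]

theorem coefc_rec (a b k : ℕ) :
    coefc (a+1) b (k+1) = coefc a b (k+1) - ((b - k : ℕ) : ℂ) * coefc a b k := by
  unfold coefc
  simp only [Nat.choose_succ_succ, Nat.descFactorial_succ]
  push_cast
  ring

theorem gpoly_rec (a b : ℕ) (w : ℂ) :
    gpoly (a+1) b w = starRingEnd ℂ w * gpoly a b w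
      - ∑ k ∈ range (a+1), coefc a b k * ((b-k : ℕ) : ℂ) * w^(b-k-1) * (starRingEnd ℂ w)^(a-k) := by
  have e2 : starRingEnd ℂ w * gpoly a b w
      = (∑ k ∈ range a, coefc a b (k+1) * w^(b-k-1) * (starRingEnd ℂ w)^(a-k))
        + coefc a b 0 * w^b * (starRingEnd ℂ w)^(a+1) := by
    unfold gpoly
    rw [Finset.mul_sum,
      Finset.sum_congr rfl (fun k hk => show starRingEnd ℂ w
          * (coefc a b k * w^(b-k) * (starRingEnd ℂ w)^(a-k))
          = coefc a b k * w^(b-k) * (starRingEnd ℂ w)^(a+1-k) by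
        rw [Finset.mem_range] at hk
        rw [show a+1-k = (a-k)+1 by omega]
        ring),
      Finset.sum_range_succ']
    congr 1
    apply Finset.sum_congr rfl
    intro k hk
    rw [Finset.mem_range] at hk
    rw [show b-(k+1) = b-k-1 by omega, show a+1-(k+1) = a-k by omega]
  have e1 : gpoly (a+1) b w
      = (∑ k ∈ range (a+1), (coefc a b (k+1) - ((b-k:ℕ):ℂ) * coefc a b k)
            * w^(b-k-1) * (starRingEnd ℂ w)^(a-k))
        + coefc a b 0 * w^b * (starRingEnd ℂ w)^(a+1) := by
    unfold gpoly
    rw [Finset.sum_range_succ']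
    congr 1
    · apply Finset.sum_congr rfl
      intro k hk
      rw [coefc_rec, show b-(k+1) = b-k-1 by omega, show a+1-(k+1) = a-k by omega]
    · unfold coefc; simp
  rw [e1, e2]
  have e3 : ∑ k ∈ range (a+1), (coefc a b (k+1) - ((b-k:ℕ):ℂ) * coefc a b k)
            * w^(b-k-1) * (starRingEnd ℂ w)^(a-k)
      = (∑ k ∈ range (a+1), coefc a b (k+1) * w^(b-k-1) * (starRingEnd ℂ w)^(a-k))
        - ∑ k ∈ range (a+1), coefc a b k * ((b-k:ℕ):ℂ) * w^(b-k-1) * (starRingEnd ℂ w)^(a-k) := by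
    rw [← Finset.sum_sub_distrib]
    apply Finset.sum_congr rfl
    intro k _
    ring
  rw [e3, Finset.sum_range_succ _ a, coefc_top]
  ring

theorem wd1_const_mul (c : ℂ) {f : ℂ → ℂ} {w : ℂ} (hf : DifferentiableAt ℝ f w) :
    wd1 (fun x => c * f x) w = c * wd1 f w := by
  rw [wd1_mul (differentiableAt_const c) hf,
    wd1_holo (differentiableAt_const c (𝕜 := ℂ))]
  simp

theorem wd1b_const_mul (c : ℂ) {f : ℂ → ℂ} {w : ℂ} (hf : DifferentiableAt ℝ f w) :
    wd1b (fun x => c * f x) w = c * wd1b f w := by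
  rw [wd1b_mul (differentiableAt_const c) hf,
    wd1b_holo (differentiableAt_const c (𝕜 := ℂ))]
  simp

theorem wd1_gpoly (a b : ℕ) (w : ℂ) :
    wd1 (gpoly a b) w
      = ∑ k ∈ range (a+1), coefc a b k * ((b-k:ℕ):ℂ) * w^(b-k-1) * (starRingEnd ℂ w)^(a-k) := by
  unfold gpoly
  rw [wd1_sum (fun k _ => by fun_prop)]
  apply Finset.sum_congr rfl
  intro k _
  rw [wd1_mono]

theorem wd1_hfun (a b : ℕ) : wd1 (hfun a b) = hfun (a+1) b := by
  funext w
  have h : hfun a b = fun x => ((-1:ℂ)^(a+b)) * (gpoly a b x * Efun x) := by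
    funext x; unfold hfun; ring
  rw [h, wd1_const_mul _ (by fun_prop),
    wd1_mul ((diff_gpoly a b).differentiableAt) (diff_Efun.differentiableAt),
    wd1_gpoly, wd1_Efun]
  unfold hfun
  rw [gpoly_rec]
  rw [show a+1+b = (a+b)+1 by omega, pow_succ]
  ring

theorem wd1_iter_hfun (m a b : ℕ) : (wd1)^[m] (hfun a b) = hfun (a+m) b := by
  induction m with
  | zero => simp
  | succ m ih => rw [Function.iterate_succ_apply', ih, wd1_hfun]; congr 1

theorem wd1b_iter_hfun (m b : ℕ) : (wd1b)^[m] (hfun 0 b) = hfun 0 (b+m) := by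
  induction m with
  | zero => simp
  | succ m ih => rw [Function.iterate_succ_apply', ih, wd1b_hfun_zero]; congr 1
theorem fderiv_prod_apply {n : ℕ} (g : Fin n → ℂ → ℂ) (hg : ∀ i, Differentiable ℝ (g i))
    (j : Fin n) (z : Fin n → ℂ) (v : ℂ) :
    fderiv ℝ (fun z : Fin n → ℂ => ∏ i, g i (z i)) z (Pi.single j v)
      = fderiv ℝ (g j) (z j) v * ∏ i ∈ Finset.univ.erase j, g i (z i) := by
  have hG : ∀ i ∈ Finset.univ, HasFDerivAt (fun z : Fin n → ℂ => g i (z i))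
      ((fderiv ℝ (g i) (z i)).comp (ContinuousLinearMap.proj i)) z :=
    fun i _ => ((hg i (z i)).hasFDerivAt).comp z
      ((ContinuousLinearMap.proj i (R := ℝ) (φ := fun _ : Fin n => ℂ)).hasFDerivAt)
  have h2 : fderiv ℝ (fun z : Fin n → ℂ => ∏ i, g i (z i)) z
      = ∑ i, (∏ k ∈ Finset.univ.erase i, g k (z k))
          • ((fderiv ℝ (g i) (z i)).comp (ContinuousLinearMap.proj i)) := by
    exact (HasFDerivAt.finset_prod hG).fderiv
  rw [h2]
  rw [ContinuousLinearMap.sum_apply]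
  rw [Finset.sum_eq_single j]
  · simp only [ContinuousLinearMap.smul_apply, ContinuousLinearMap.comp_apply,
      ContinuousLinearMap.proj_apply, Pi.single_eq_same, smul_eq_mul]
    ring
  · intro i _ hij
    simp only [ContinuousLinearMap.smul_apply, ContinuousLinearMap.comp_apply,
      ContinuousLinearMap.proj_apply, smul_eq_mul]
    rw [Pi.single_eq_of_ne hij]
    simp
  · intro h; exact absurd (Finset.mem_univ j) h

theorem prod_updateA_hfun {n : ℕ} (A B : Fin n → ℕ) (j : Fin n) (a' : ℕ) (z : Fin n → ℂ) :
    (∏ i, hfun (Function.update A j a' i) (B i) (z i))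
      = hfun a' (B j) (z j) * ∏ i ∈ Finset.univ.erase j, hfun (A i) (B i) (z i) := by
  have h : ∀ i, hfun (Function.update A j a' i) (B i) (z i)
      = Function.update (fun i => hfun (A i) (B i) (z i)) j (hfun a' (B j) (z j)) i := by
    intro i
    by_cases hij : i = j
    · subst hij; simp
    · simp [Function.update_of_ne hij]
  rw [Finset.prod_congr rfl (fun i _ => h i), Finset.prod_update_of_mem (Finset.mem_univ j),
    Finset.sdiff_singleton_eq_erase]

theorem prod_updateB_hfun {n : ℕ} (A B : Fin n → ℕ) (j : Fin n) (b' : ℕ) (z : Fin n → ℂ) :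
    (∏ i, hfun (A i) (Function.update B j b' i) (z i))
      = hfun (A j) b' (z j) * ∏ i ∈ Finset.univ.erase j, hfun (A i) (B i) (z i) := by
  have h : ∀ i, hfun (A i) (Function.update B j b' i) (z i)
      = Function.update (fun i => hfun (A i) (B i) (z i)) j (hfun (A j) b' (z j)) i := by
    intro i
    by_cases hij : i = j
    · subst hij; simp
    · simp [Function.update_of_ne hij]
  rw [Finset.prod_congr rfl (fun i _ => h i), Finset.prod_update_of_mem (Finset.mem_univ j),
    Finset.sdiff_singleton_eq_erase]

theorem wz_P {n : ℕ} (j : Fin n) (A B : Fin n → ℕ) :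
    wz n j (fun z => ∏ i, hfun (A i) (B i) (z i))
      = fun z => ∏ i, hfun (Function.update A j (A j + 1) i) (B i) (z i) := by
  funext z
  unfold wz pdx pdy
  rw [fderiv_prod_apply _ (fun i => diff_hfun _ _) j z 1,
    fderiv_prod_apply _ (fun i => diff_hfun _ _) j z Complex.I,
    prod_updateA_hfun, ← wd1_hfun]
  unfold wd1
  ring

theorem wzb_P0 {n : ℕ} (j : Fin n) (B : Fin n → ℕ) :
    wzb n j (fun z => ∏ i, hfun 0 (B i) (z i))
      = fun z => ∏ i, hfun 0 (Function.update B j (B j + 1) i) (z i) := by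
  funext z
  unfold wzb pdx pdy
  rw [fderiv_prod_apply (fun i => hfun 0 (B i)) (fun i => diff_hfun _ _) j z 1,
    fderiv_prod_apply (fun i => hfun 0 (B i)) (fun i => diff_hfun _ _) j z Complex.I,
    prod_updateB_hfun (fun _ => 0) B j (B j + 1) z, ← wd1b_hfun_zero]
  unfold wd1b
  ring

theorem wz_P_iter {n : ℕ} (j : Fin n) (m : ℕ) (A B : Fin n → ℕ) :
    (wz n j)^[m] (fun z => ∏ i, hfun (A i) (B i) (z i))
      = fun z => ∏ i, hfun (Function.update A j (A j + m) i) (B i) (z i) := by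
  induction m with
  | zero => simp
  | succ m ih =>
    rw [Function.iterate_succ_apply', ih]
    have h : (fun z : Fin n → ℂ => ∏ i, hfun (Function.update A j (A j + m) i) (B i) (z i))
        = fun z => ∏ i, hfun ((Function.update A j (A j + m)) i) (B i) (z i) := rfl
    rw [h, wz_P]
    funext z
    apply Finset.prod_congr rfl
    intro i _
    congr 1
    by_cases hij : i = j
    · subst hij; simp; omega
    · simp [Function.update_of_ne hij]

theorem wzb_P0_iter {n : ℕ} (j : Fin n) (m : ℕ) (B : Fin n → ℕ) :
    (wzb n j)^[m] (fun z => ∏ i, hfun 0 (B i) (z i))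
      = fun z => ∏ i, hfun 0 (Function.update B j (B j + m) i) (z i) := by
  induction m with
  | zero => simp
  | succ m ih =>
    rw [Function.iterate_succ_apply', ih]
    have h : (fun z : Fin n → ℂ => ∏ i, hfun 0 (Function.update B j (B j + m) i) (z i))
        = fun z => ∏ i, hfun 0 ((Function.update B j (B j + m)) i) (z i) := rfl
    rw [h, wzb_P0]
    funext z
    apply Finset.prod_congr rfl
    intro i _
    congr 1
    by_cases hij : i = j
    · subst hij; simp; omega
    · simp [Function.update_of_ne hij]

theorem foldr_wz {n : ℕ} (α : Fin n → ℕ) (L : List (Fin n)) (A B : Fin n → ℕ) :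
    L.foldr (fun j g => (wz n j)^[α j] g) (fun z => ∏ i, hfun (A i) (B i) (z i))
      = fun z => ∏ i, hfun (A i + L.count i * α i) (B i) (z i) := by
  induction L with
  | nil => simp
  | cons j L ih =>
    rw [List.foldr_cons, ih, wz_P_iter]
    funext z
    apply Finset.prod_congr rfl
    intro i _
    congr 1
    by_cases hij : i = j
    · subst hij; simp [List.count_cons]; ring
    · simp [Function.update_of_ne hij, List.count_cons, hij, Ne.symm hij]

theorem foldr_wzb {n : ℕ} (β : Fin n → ℕ) (L : List (Fin n)) (B : Fin n → ℕ) :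
    L.foldr (fun j g => (wzb n j)^[β j] g) (fun z => ∏ i, hfun 0 (B i) (z i))
      = fun z => ∏ i, hfun 0 (B i + L.count i * β i) (z i) := by
  induction L with
  | nil => simp
  | cons j L ih =>
    rw [List.foldr_cons, ih, wzb_P0_iter]
    funext z
    apply Finset.prod_congr rfl
    intro i _
    congr 1
    by_cases hij : i = j
    · subst hij; simp [List.count_cons]; ring
    · simp [Function.update_of_ne hij, List.count_cons, hij, Ne.symm hij]

theorem count_finRange {n : ℕ} (i : Fin n) : (List.finRange n).count i = 1 := by
  rw [List.count_eq_one_of_mem (List.nodup_finRange n) (List.mem_finRange i)]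

theorem gauss_eq_prod (n : ℕ) : gauss n = fun z => ∏ i, hfun 0 0 (z i) := by
  funext z
  unfold gauss normSq2
  rw [hfun_zero_zero]
  unfold Efun
  push_cast
  rw [← Finset.sum_neg_distrib, Complex.exp_sum]
  apply Finset.prod_congr rfl
  intro i _
  rw [Complex.mul_conj]

theorem wzMulti_wzbMulti_gauss {n : ℕ} (α β : Fin n → ℕ) :
    wzMulti n α (wzbMulti n β (gauss n)) = fun z => ∏ i, hfun (α i) (β i) (z i) := by
  unfold wzMulti wzbMulti
  rw [gauss_eq_prod, foldr_wzb]
  simp only [count_finRange, one_mul, zero_add]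
  rw [foldr_wz]
  simp only [count_finRange, one_mul, zero_add]


theorem comp_X_add_one_coeff (a : ℕ) (p : Polynomial ℝ) (hp : p.natDegree ≤ a + 1) (j : ℕ) :
    (p.comp (X + 1)).coeff j = ∑ i ∈ range (a + 2), p.coeff i * (i.choose j) := by
  rw [comp_eq_sum_left, p.sum_over_range' (fun n => by simp) (a+2) (by omega),
    Polynomial.finset_sum_coeff]
  apply Finset.sum_congr rfl
  intro i _
  rw [coeff_C_mul, coeff_X_add_one_pow]

theorem fd_lemma : ∀ (a : ℕ) (p : Polynomial ℝ), p.natDegree ≤ a →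
    ∑ l ∈ range (a + 1), (-1 : ℝ)^l * (a.choose l) * p.eval (l : ℝ)
      = (-1 : ℝ)^a * (a.factorial) * p.coeff a := by
  intro a
  induction a with
  | zero =>
    intro p hp
    have hc := Polynomial.eq_C_of_natDegree_le_zero hp
    rw [hc]
    simp
  | succ a ih =>
    intro p hp
    set q : Polynomial ℝ := p - p.comp (X + 1) with hq
    have hcomp := comp_X_add_one_coeff a p hp
    have hqc : ∀ j, q.coeff j = p.coeff j - ∑ i ∈ range (a + 2), p.coeff i * (i.choose j) := by
      intro j; rw [hq, coeff_sub, hcomp]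
    have hqdeg : q.natDegree ≤ a := by
      rw [Polynomial.natDegree_le_iff_coeff_eq_zero]
      intro j hj
      rw [hqc]
      have h1 : p.coeff j = (if j = a + 1 then p.coeff (a+1) else 0) := by
        split
        · subst ‹j = a+1›; rfl
        · exact coeff_eq_zero_of_natDegree_lt (by omega)
      rw [h1, Finset.sum_eq_single (a+1)]
      · rcases eq_or_ne j (a+1) with h | h
        · subst h; simp
        · rw [Nat.choose_eq_zero_of_lt (by omega)]
          simp [h]
      · intro i hi hine
        rw [Finset.mem_range] at hi
        rw [Nat.choose_eq_zero_of_lt (by omega), Nat.cast_zero, mul_zero]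
      · intro h; exact absurd (Finset.mem_range.mpr (by omega)) h
    have hqa : q.coeff a = -((a : ℝ) + 1) * p.coeff (a + 1) := by
      rw [hqc, Finset.sum_range_succ, Finset.sum_range_succ,
        Finset.sum_eq_zero (fun i hi => by
          rw [Finset.mem_range] at hi
          rw [Nat.choose_eq_zero_of_lt (by omega), Nat.cast_zero, mul_zero]),
        Nat.choose_self, Nat.choose_succ_self_right]
      push_cast
      ring
    set A : ℝ := ∑ l ∈ range (a+1), (-1:ℝ)^l * (a.choose l) * p.eval ((l+1 : ℕ) : ℝ) with hA
    set B : ℝ := ∑ l ∈ range (a+1), (-1:ℝ)^l * (a.choose (l+1)) * p.eval ((l+1 : ℕ) : ℝ) with hB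
    have hS1 : ∑ l ∈ range (a + 2), (-1 : ℝ)^l * ((a+1).choose l) * p.eval (l : ℝ)
        = -A - B + p.eval 0 := by
      rw [Finset.sum_range_succ' (fun l => (-1 : ℝ)^l * ((a+1).choose l) * p.eval (l : ℝ)) (a+1)]
      rw [Finset.sum_congr rfl (fun l _ => by
        rw [Nat.choose_succ_succ]
        push_cast
        ring :
        ∀ l ∈ range (a+1), (-1 : ℝ)^(l+1) * ((a+1).choose (l+1)) * p.eval ((l+1 : ℕ) : ℝ)
          = -((-1:ℝ)^l * (a.choose l) * p.eval ((l+1:ℕ):ℝ))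
            - (-1:ℝ)^l * (a.choose (l+1)) * p.eval ((l+1:ℕ):ℝ))]
      rw [Finset.sum_sub_distrib, Finset.sum_neg_distrib, hA, hB]
      simp
    have hS2 : ∑ l ∈ range (a + 1), (-1 : ℝ)^l * (a.choose l) * p.eval (l : ℝ)
        = -B + p.eval 0 := by
      have ext2 : ∑ l ∈ range (a + 2), (-1 : ℝ)^l * (a.choose l) * p.eval (l : ℝ)
          = ∑ l ∈ range (a + 1), (-1 : ℝ)^l * (a.choose l) * p.eval (l : ℝ) := by
        rw [Finset.sum_range_succ, Nat.choose_succ_self]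
        simp
      rw [← ext2, Finset.sum_range_succ' (fun l => (-1 : ℝ)^l * (a.choose l) * p.eval (l : ℝ)) (a+1)]
      rw [Finset.sum_congr rfl (fun l _ => by push_cast; ring :
        ∀ l ∈ range (a+1), (-1 : ℝ)^(l+1) * (a.choose (l+1)) * p.eval ((l+1 : ℕ) : ℝ)
          = -((-1:ℝ)^l * (a.choose (l+1)) * p.eval ((l+1:ℕ):ℝ)))]
      rw [Finset.sum_neg_distrib, hB]
      simp
    have hSq : ∑ l ∈ range (a+1), (-1:ℝ)^l * (a.choose l) * q.eval (l : ℝ)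
        = (∑ l ∈ range (a + 1), (-1 : ℝ)^l * (a.choose l) * p.eval (l : ℝ)) - A := by
      rw [Finset.sum_congr rfl (fun l _ => by
        rw [hq, eval_sub, eval_comp]
        push_cast
        simp
        ring :
        ∀ l ∈ range (a+1), (-1:ℝ)^l * (a.choose l) * q.eval (l : ℝ)
          = (-1:ℝ)^l * (a.choose l) * p.eval (l : ℝ)
            - (-1:ℝ)^l * (a.choose l) * p.eval ((l+1 : ℕ) : ℝ))]
      rw [Finset.sum_sub_distrib, hA]
    have key : ∑ l ∈ range (a + 2), (-1 : ℝ)^l * ((a+1).choose l) * p.eval (l : ℝ)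
        = ∑ l ∈ range (a+1), (-1:ℝ)^l * (a.choose l) * q.eval (l : ℝ) := by
      rw [hSq, hS2, hS1]
      ring
    rw [key, ih q hqdeg, hqa, Nat.factorial_succ]
    push_cast
    ring

noncomputable def crr (a b k : ℕ) : ℝ := (-1 : ℝ)^k * (a.choose k) * (b.descFactorial k)

noncomputable def pkpoly (a b k : ℕ) : Polynomial ℝ :=
  C (b.factorial : ℝ) * ∏ i ∈ range (a-k), (C ((b+1+i : ℕ) : ℝ) - X)

theorem natDegree_CsubX (c : ℝ) : (C c - X).natDegree = 1 := by
  rw [show (C c - X) = -(X - C c) by ring, natDegree_neg, natDegree_X_sub_C]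

theorem asc_prod (n m : ℕ) : ∏ i ∈ range m, (n + i) = n.ascFactorial m := by
  induction m with
  | zero => simp
  | succ m ih => rw [Finset.prod_range_succ, ih, Nat.ascFactorial_succ, Nat.mul_comm]

theorem pkpoly_natDegree_le (a b k : ℕ) : (pkpoly a b k).natDegree ≤ a - k := by
  unfold pkpoly
  refine le_trans (natDegree_mul_le) ?_
  rw [natDegree_C, zero_add]
  refine le_trans (natDegree_prod_le _ _) ?_
  have h1 : ∑ i ∈ range (a-k), (C ((b+1+i : ℕ) : ℝ) - X).natDegree
      ≤ ∑ _i ∈ range (a-k), (1 : ℕ) :=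
    Finset.sum_le_sum (fun i _ => le_of_eq (natDegree_CsubX _))
  refine le_trans h1 ?_
  simp

theorem pkpoly_eval (a b k l : ℕ) (hk : k ≤ min a b) (hl : l ≤ a) :
    (pkpoly a b k).eval (l : ℝ)
      = (b.descFactorial l : ℝ) * ((a+b-k-l).factorial : ℝ) := by
  unfold pkpoly
  rw [eval_mul, eval_C, eval_prod]
  simp only [eval_sub, eval_C, eval_X]
  rcases le_or_gt l b with hlb | hlb
  · have hcast : ∀ i ∈ range (a-k), ((b+1+i : ℕ) : ℝ) - (l : ℝ) = ((b+1+i-l : ℕ) : ℝ) := by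
      intro i _
      rw [Nat.cast_sub (by omega)]
    rw [Finset.prod_congr rfl hcast, ← Nat.cast_prod]
    have hnat : (b.factorial) * (∏ i ∈ range (a-k), (b+1+i-l))
        = (b.descFactorial l) * ((a+b-k-l).factorial) := by
      have h1 : ∀ i ∈ range (a-k), b+1+i-l = (b-l+1) + i := fun i _ => by omega
      rw [Finset.prod_congr rfl h1, asc_prod,
        ← Nat.factorial_mul_descFactorial hlb, mul_comm (b-l).factorial, mul_assoc,
        Nat.factorial_mul_ascFactorial, show b-l+(a-k) = a+b-k-l by omega]
    rw [← Nat.cast_mul, hnat]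
    push_cast
    ring
  · rw [Nat.descFactorial_of_lt hlb]
    rw [Finset.prod_eq_zero (Finset.mem_range.mpr (show l-b-1 < a-k by omega))
      (by rw [show b+1+(l-b-1) = l by omega]; ring)]
    simp

theorem pkpoly_coeff_zero (a b : ℕ) :
    (pkpoly a b 0).coeff a = (b.factorial : ℝ) * (-1)^a := by
  unfold pkpoly
  rw [Nat.sub_zero]
  have h1 : ∀ i ∈ range a, (C ((b+1+i : ℕ) : ℝ) - X) = (-1) * (X - C ((b+1+i : ℕ) : ℝ)) := by
    intro i _; ring
  rw [Finset.prod_congr rfl h1, Finset.prod_mul_distrib, Finset.prod_const]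
  have hP : (∏ i ∈ range a, (X - C ((b+1+i : ℕ) : ℝ))).Monic :=
    monic_prod_of_monic _ _ (fun i _ => monic_X_sub_C _)
  have hdeg : (∏ i ∈ range a, (X - C ((b+1+i : ℕ) : ℝ))).natDegree = a := by
    rw [natDegree_prod_of_monic _ _ (fun i _ => monic_X_sub_C _)]
    simp only [natDegree_X_sub_C]
    simp
  have hc : (∏ i ∈ range a, (X - C ((b+1+i : ℕ) : ℝ))).coeff a = 1 := by
    have := hP.coeff_natDegree
    rwa [hdeg] at this
  rw [Finset.card_range,
    show ((-1 : Polynomial ℝ)^a) = C ((-1 : ℝ)^a) by rw [map_pow, map_neg, map_one],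
    ← mul_assoc, ← map_mul, coeff_C_mul, hc, mul_one]

theorem T_lemma (a b k : ℕ) (hk : k ≤ min a b) :
    ∑ l ∈ range (a+1), (-1:ℝ)^l * (a.choose l)
        * ((b.descFactorial l : ℝ) * ((a+b-k-l).factorial : ℝ))
      = if k = 0 then (a.factorial : ℝ) * (b.factorial : ℝ) else 0 := by
  have hfd := fd_lemma a (pkpoly a b k) (le_trans (pkpoly_natDegree_le a b k) (by omega))
  rw [Finset.sum_congr rfl (fun l hl => by
    rw [← pkpoly_eval a b k l hk (by rw [Finset.mem_range] at hl; omega)])]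
  rw [hfd]
  rcases Nat.eq_zero_or_pos k with h0 | h0
  · subst h0
    rw [pkpoly_coeff_zero, if_pos rfl]
    have hsq : ((-1:ℝ)^a) * ((-1:ℝ)^a) = 1 := by
      rw [← pow_add, ← two_mul, pow_mul]
      norm_num
    calc (-1:ℝ)^a * (a.factorial : ℝ) * ((b.factorial : ℝ) * (-1)^a)
        = ((-1:ℝ)^a * (-1:ℝ)^a) * ((a.factorial : ℝ) * (b.factorial : ℝ)) := by ring
      _ = (a.factorial : ℝ) * (b.factorial : ℝ) := by rw [hsq, one_mul]
  · rw [coeff_eq_zero_of_natDegree_lt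
      (lt_of_le_of_lt (pkpoly_natDegree_le a b k) (by omega)), if_neg (by omega)]
    ring

theorem double_sum (a b : ℕ) :
    ∑ k ∈ range (min a b + 1), ∑ l ∈ range (min a b + 1),
      crr a b k * crr a b l * ((a+b-k-l).factorial : ℝ)
      = (a.factorial : ℝ) * (b.factorial : ℝ) := by
  have inner : ∀ k ∈ range (min a b + 1),
      ∑ l ∈ range (min a b + 1), crr a b k * crr a b l * ((a+b-k-l).factorial : ℝ)
        = crr a b k * (if k = 0 then (a.factorial : ℝ) * (b.factorial : ℝ) else 0) := by
    intro k hk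
    rw [Finset.mem_range] at hk
    have hext : ∑ l ∈ range (min a b + 1), crr a b k * crr a b l * ((a+b-k-l).factorial : ℝ)
        = ∑ l ∈ range (a + 1), crr a b k * crr a b l * ((a+b-k-l).factorial : ℝ) := by
      apply Finset.sum_subset
      · intro x hx; rw [Finset.mem_range] at *; omega
      · intro x hx hnx
        rw [Finset.mem_range] at hx hnx
        have hxb : b < x := by omega
        unfold crr
        rw [Nat.descFactorial_of_lt hxb]
        push_cast
        ring
    rw [hext, ← T_lemma a b k (by omega), Finset.mul_sum]
    apply Finset.sum_congr rfl
    intro l _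
    unfold crr
    push_cast
    ring
  rw [Finset.sum_congr rfl inner, Finset.sum_eq_single_of_mem 0 (Finset.mem_range.mpr (by omega))]
  · rw [if_pos rfl]
    unfold crr
    simp
  · intro i _ hi
    rw [if_neg hi, mul_zero]


def crr' (a b k : ℕ) : ℝ := (-1 : ℝ)^k * (a.choose k) * (b.descFactorial k)

theorem integrable_J (m : ℕ) :
    Integrable (fun w : ℂ => (Complex.normSq w)^m * Real.exp (-Complex.normSq w)) := by
  have h1 : Integrable (fun x : ℝ => Real.exp (-(1/2) * x^2)) :=
    integrable_exp_neg_mul_sq (by norm_num)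
  have h2 : Integrable (fun p : ℝ × ℝ => Real.exp (-(1/2) * p.1^2) * Real.exp (-(1/2) * p.2^2)) :=
    h1.mul_prod h1
  have h3 : Integrable (fun z : ℂ => Real.exp (-(1/2) * Complex.normSq z)) := by
    have h4 := (Complex.volume_preserving_equiv_real_prod.integrable_comp_emb
      (Complex.measurableEquivRealProd.measurableEmbedding)).mpr h2
    apply h4.congr
    filter_upwards with z
    show Real.exp (-(1/2) * z.re^2) * Real.exp (-(1/2) * z.im^2) = _
    rw [← Real.exp_add, Complex.normSq_apply]
    ring_nf
  have h5 := h3.const_mul ((2:ℝ)^m * m.factorial)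
  apply h5.mono
  · apply Continuous.aestronglyMeasurable
    continuity
  · filter_upwards with w
    have hq : 0 ≤ Complex.normSq w := Complex.normSq_nonneg w
    set q := Complex.normSq w with hqdef
    have hb := Real.pow_div_factorial_le_exp (x := q/2) (by positivity) m
    have hpow : q^m ≤ 2^m * m.factorial * Real.exp (q/2) := by
      have h6 : (q/2)^m = q^m / 2^m := div_pow q 2 m
      rw [h6] at hb
      have h7 : (0:ℝ) < 2^m := by positivity
      have h8 : (0:ℝ) < (m.factorial : ℝ) := by positivity
      calc q^m = (q^m / 2^m / m.factorial) * (2^m * m.factorial) := by field_simp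
        _ ≤ Real.exp (q/2) * (2^m * m.factorial) := by
            apply mul_le_mul_of_nonneg_right _ (by positivity)
            exact hb
        _ = 2^m * m.factorial * Real.exp (q/2) := by ring
    rw [show ‖(Complex.normSq w)^m * Real.exp (-Complex.normSq w)‖
        = |q^m * Real.exp (-q)| from rfl,
      show ‖(2:ℝ)^m * (m.factorial:ℝ) * Real.exp (-(1/2) * Complex.normSq w)‖
        = |(2:ℝ)^m * (m.factorial:ℝ) * Real.exp (-(1/2) * q)| from rfl,
      _root_.abs_of_nonneg (by positivity), _root_.abs_of_nonneg (by positivity)]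
    calc q^m * Real.exp (-q) ≤ (2^m * m.factorial * Real.exp (q/2)) * Real.exp (-q) :=
          mul_le_mul_of_nonneg_right hpow (le_of_lt (Real.exp_pos _))
      _ = 2^m * (m.factorial : ℝ) * Real.exp (-(1/2) * q) := by
          rw [mul_assoc, ← Real.exp_add]
          ring_nf

theorem J_value (m : ℕ) :
    ∫ w : ℂ, (Complex.normSq w)^m * Real.exp (-Complex.normSq w)
      = Real.pi * m.factorial := by
  have key := Complex.integral_rpow_mul_exp_neg_rpow (p := 2) (q := (2*m : ℕ))
    (by norm_num) (by
    have h0 : (0:ℝ) ≤ ((2*m : ℕ):ℝ) := by positivity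
    linarith)
  have hcongr : (fun w : ℂ => (Complex.normSq w)^m * Real.exp (-Complex.normSq w))
      = fun w : ℂ => ‖w‖ ^ ((2*m : ℕ) : ℝ) * Real.exp (-‖w‖ ^ (2:ℝ)) := by
    funext w
    rw [Real.rpow_natCast, show ((2:ℝ)) = ((2:ℕ):ℝ) by norm_num, Real.rpow_natCast]
    rw [Complex.normSq_eq_norm_sq]
    rw [← pow_mul]
  rw [hcongr, key]
  rw [show (((2*m : ℕ):ℝ) + 2)/2 = (m:ℝ) + 1 by push_cast; ring,
    Real.Gamma_nat_eq_factorial]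
  ring

theorem coefc_eq (a b k : ℕ) : coefc a b k = ((crr a b k : ℝ) : ℂ) := by
  unfold coefc crr; push_cast; ring

theorem conj_coefc (a b k : ℕ) : (starRingEnd ℂ) (coefc a b k) = coefc a b k := by
  rw [coefc_eq, Complex.conj_ofReal]

theorem gpoly_min (a b : ℕ) (w : ℂ) : gpoly a b w
    = ∑ k ∈ range (min a b + 1), coefc a b k * w^(b-k) * (starRingEnd ℂ w)^(a-k) := by
  unfold gpoly
  symm
  apply Finset.sum_subset
  · intro x hx; rw [Finset.mem_range] at *; omega
  · intro x hx hnx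
    rw [Finset.mem_range] at hx hnx
    have hbx : b < x := by omega
    unfold coefc
    rw [Nat.descFactorial_of_lt hbx]
    simp

theorem gpoly_mul_conj (a b : ℕ) (w : ℂ) :
    gpoly a b w * (starRingEnd ℂ) (gpoly a b w)
      = ((∑ k ∈ range (min a b + 1), ∑ l ∈ range (min a b + 1),
          crr a b k * crr a b l * (Complex.normSq w)^(a+b-k-l) : ℝ) : ℂ) := by
  rw [gpoly_min, map_sum, Finset.sum_mul_sum]
  push_cast
  apply Finset.sum_congr rfl; intro k hk
  apply Finset.sum_congr rfl; intro l hl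
  rw [Finset.mem_range] at hk hl
  rw [map_mul, map_mul, map_pow, map_pow, Complex.conj_conj, conj_coefc, coefc_eq, coefc_eq]
  calc ((crr a b k : ℝ):ℂ) * w^(b-k) * (starRingEnd ℂ w)^(a-k)
        * (((crr a b l : ℝ):ℂ) * (starRingEnd ℂ w)^(b-l) * w^(a-l))
      = ((crr a b k : ℝ):ℂ) * ((crr a b l : ℝ):ℂ)
        * (w^(b-k) * w^(a-l)) * ((starRingEnd ℂ w)^(a-k) * (starRingEnd ℂ w)^(b-l)) := by ring
    _ = ((crr a b k : ℝ):ℂ) * ((crr a b l : ℝ):ℂ)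
        * (w^(a+b-k-l) * (starRingEnd ℂ w)^(a+b-k-l)) := by
        rw [← pow_add, ← pow_add, show (b-k)+(a-l) = a+b-k-l by omega,
          show (a-k)+(b-l) = a+b-k-l by omega]
        ring
    _ = ((crr a b k : ℝ):ℂ) * ((crr a b l : ℝ):ℂ) * ((Complex.normSq w : ℝ):ℂ)^(a+b-k-l) := by
        rw [← mul_pow, Complex.mul_conj]
    _ = _ := by push_cast; ring

theorem norm_gpoly_sq (a b : ℕ) (w : ℂ) :
    ‖gpoly a b w‖^2 = ∑ k ∈ range (min a b + 1), ∑ l ∈ range (min a b + 1),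
      crr a b k * crr a b l * (Complex.normSq w)^(a+b-k-l) := by
  have h := gpoly_mul_conj a b w
  rw [Complex.mul_conj] at h
  have h2 := Complex.ofReal_inj.mp h
  rw [Complex.sq_norm, h2]

theorem Fone_integral (a b : ℕ) :
    ∫ w : ℂ, ‖gpoly a b w‖^2 * Real.exp (-Complex.normSq w)
      = Real.pi * (a.factorial : ℝ) * (b.factorial : ℝ) := by
  have hpt : ∀ w : ℂ, ‖gpoly a b w‖^2 * Real.exp (-Complex.normSq w)
      = ∑ k ∈ range (min a b + 1), ∑ l ∈ range (min a b + 1),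
          crr a b k * crr a b l * ((Complex.normSq w)^(a+b-k-l) * Real.exp (-Complex.normSq w)) := by
    intro w
    rw [norm_gpoly_sq, Finset.sum_mul]
    apply Finset.sum_congr rfl; intro k _
    rw [Finset.sum_mul]
    apply Finset.sum_congr rfl; intro l _
    ring
  simp only [hpt]
  rw [MeasureTheory.integral_finset_sum _ (fun k _ => integrable_finset_sum _
    (fun l _ => ((integrable_J (a+b-k-l)).const_mul _)))]
  rw [Finset.sum_congr rfl (fun k _ => MeasureTheory.integral_finset_sum _
    (fun l _ => ((integrable_J (a+b-k-l)).const_mul _)))]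
  rw [Finset.sum_congr rfl (fun k _ => Finset.sum_congr rfl (fun l _ =>
    MeasureTheory.integral_const_mul (crr a b k * crr a b l)
      (fun w : ℂ => (Complex.normSq w)^(a+b-k-l) * Real.exp (-Complex.normSq w))))]
  rw [Finset.sum_congr rfl (fun k _ => Finset.sum_congr rfl (fun l _ => by
    rw [J_value (a+b-k-l)]))]
  have hfin : ∑ k ∈ range (min a b + 1), ∑ l ∈ range (min a b + 1),
      crr a b k * crr a b l * (Real.pi * ((a+b-k-l).factorial : ℝ))
      = Real.pi * ∑ k ∈ range (min a b + 1), ∑ l ∈ range (min a b + 1),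
        crr a b k * crr a b l * ((a+b-k-l).factorial : ℝ) := by
    rw [Finset.mul_sum]
    apply Finset.sum_congr rfl; intro k _
    rw [Finset.mul_sum]
    apply Finset.sum_congr rfl; intro l _
    ring
  rw [hfin, double_sum]
  ring

theorem norm_fab_sq (n : ℕ) (α β : Fin n → ℕ) (z : Fin n → ℂ) :
    ‖fab n α β z‖^2
      = ∏ i, (‖gpoly (α i) (β i) (z i)‖^2 * Real.exp (-(Complex.normSq (z i)))) := by
  unfold fab
  rw [wzMulti_wzbMulti_gauss]
  rw [norm_mul, norm_mul, norm_prod]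
  have h1 : ‖(-1:ℂ)^((∑ j, α j) + (∑ j, β j))‖ = 1 := by
    rw [norm_pow, norm_neg, norm_one, one_pow]
  have h2 : ‖Complex.exp ((normSq2 n z : ℂ)/2)‖ = Real.exp (normSq2 n z / 2) := by
    rw [Complex.norm_exp,
      show ((normSq2 n z : ℂ)/2) = ((normSq2 n z / 2 : ℝ) : ℂ) by push_cast; ring,
      Complex.ofReal_re]
  have h3 : ∀ (w : ℂ) (a b : ℕ), ‖hfun a b w‖ = ‖gpoly a b w‖ * Real.exp (-(Complex.normSq w)) := by
    intro w a b
    unfold hfun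
    rw [norm_mul, norm_mul, norm_pow, norm_neg, norm_one, one_pow, one_mul]
    congr 1
    unfold Efun
    rw [
      show -(w * (starRingEnd ℂ) w) = ((-(Complex.normSq w) : ℝ) : ℂ) by
        rw [Complex.mul_conj]; push_cast; ring,
      Complex.norm_exp, Complex.ofReal_re]
  rw [h1, h2, one_mul, Finset.prod_congr rfl (fun i _ => h3 (z i) (α i) (β i))]
  rw [mul_pow, ← Finset.prod_pow]
  have e1 : (Real.exp (normSq2 n z / 2))^2 = Real.exp (normSq2 n z) := by
    rw [sq, ← Real.exp_add]
    congr 1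
    ring
  rw [e1]
  unfold normSq2
  rw [Real.exp_sum, ← Finset.prod_mul_distrib]
  apply Finset.prod_congr rfl
  intro i _
  have hsq : (Real.exp (-(Complex.normSq (z i))))^2 = Real.exp (-(2 * Complex.normSq (z i))) := by
    rw [sq, ← Real.exp_add]
    congr 1
    ring
  have h9 : Real.exp (Complex.normSq (z i)) * Real.exp (-(2 * Complex.normSq (z i)))
      = Real.exp (-(Complex.normSq (z i))) := by
    rw [← Real.exp_add]
    congr 1
    ring
  calc Real.exp (Complex.normSq (z i))
        * (‖gpoly (α i) (β i) (z i)‖ * Real.exp (-(Complex.normSq (z i))))^2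
      = ‖gpoly (α i) (β i) (z i)‖^2
        * (Real.exp (Complex.normSq (z i)) * (Real.exp (-(Complex.normSq (z i))))^2) := by ring
    _ = _ := by rw [hsq, h9]

end

theorem stmt10 (n : ℕ) (α β : Fin n → ℕ) :
    ∫ z : Fin n → ℂ, ‖fab n α β z‖ ^ 2 =
      Real.pi ^ n * (∏ j, Nat.factorial (α j)) * (∏ j, Nat.factorial (β j)) := by
  rw [show (fun z : Fin n → ℂ => ‖fab n α β z‖^2)
    = fun z => ∏ i, (‖gpoly (α i) (β i) (z i)‖^2 * Real.exp (-(Complex.normSq (z i))))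
    from funext (norm_fab_sq n α β)]
  rw [MeasureTheory.integral_fintype_prod_volume_eq_prod (ι := Fin n)
    (fun i (w : ℂ) => ‖gpoly (α i) (β i) w‖^2 * Real.exp (-(Complex.normSq w)))]
  rw [Finset.prod_congr rfl (fun i _ => Fone_integral (α i) (β i))]
  rw [Finset.prod_mul_distrib, Finset.prod_mul_distrib, Finset.prod_const, Finset.card_univ,
    Fintype.card_fin]
  push_cast
  ring
end
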